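/- arXiv:1210.3291 — 3 statements merged into one kernel-verified Lean document; each statement's English description precedes it below -/
import Mathlib

section
/- Let (Ω, f, τ) satisfy the suspension semiflow assumptions, in particular ‖1/f'‖_{L∞(Ω)} < 1 and (H3): Σ_i ‖1/f'‖_{L∞(ω_i)}·e^{σ‖τ‖_{L∞(ω_i)}} < ∞. Then ∫_Ω e^{στ(x)} dx < ∞ (exponential tails). -/
open MeasureTheory Set ENNReal
open Topology Filter

noncomputable section

/-- The `L^∞` norm of a real-valued function over a set (w.r.t. Lebesgue measure). -/
def supNormE (g : ℝ → ℝ) (s : Set ℝ) : ℝ≥0∞ :=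
  essSup (fun x => (‖g x‖₊ : ℝ≥0∞)) (volume.restrict s)

/-- Extended exponential `ℝ≥0∞ → ℝ≥0∞`, with `eexp ⊤ = ⊤`. -/
def eexp (t : ℝ≥0∞) : ℝ≥0∞ :=
  if t = ⊤ then ⊤ else ENNReal.ofReal (Real.exp t.toReal)

private lemma dichotomy {c d : ℝ} (f' : ℝ → ℝ) (hcont : ContinuousOn f' (Set.Ioo c d))
    (M : ℝ≥0∞)
    (hM : essSup (fun x => (‖(f' x)⁻¹‖₊ : ℝ≥0∞)) (volume.restrict (Set.Ioo c d)) ≤ M) :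
    ∀ x ∈ Set.Ioo c d, f' x = 0 ∨ ((‖(f' x)⁻¹‖₊ : ℝ≥0∞) ≤ M) := by
  by_contra h
  push_neg at h
  obtain ⟨x, hx, hfx, hMx⟩ := h
  obtain ⟨r, hMr, hrx⟩ := ENNReal.lt_iff_exists_nnreal_btwn.1 hMx
  have hcont' : ContinuousAt (fun y => |(f' y)⁻¹|) x := by
    have h1 : ContinuousAt f' x := hcont.continuousAt (isOpen_Ioo.mem_nhds hx)
    exact ((continuousAt_inv₀ hfx).comp h1).abs
  have hrx' : (r : ℝ) < |(f' x)⁻¹| := by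
    rw [ENNReal.coe_lt_coe] at hrx
    calc (r : ℝ) < (‖(f' x)⁻¹‖₊ : ℝ) := by exact_mod_cast hrx
    _ = |(f' x)⁻¹| := by simp [Real.norm_eq_abs, abs_inv]
  have hev : ∀ᶠ y in 𝓝 x, (r : ℝ) < |(f' y)⁻¹| := hcont'.eventually (eventually_gt_nhds hrx')
  obtain ⟨ε, hε, hball⟩ := Metric.mem_nhds_iff.1 (Filter.inter_mem hev (isOpen_Ioo.mem_nhds hx))
  have hae : ∀ᵐ y ∂(volume.restrict (Set.Ioo c d)), (‖(f' y)⁻¹‖₊ : ℝ≥0∞) ≤ M :=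
    (ae_le_essSup _).mono fun y hy => hy.trans hM
  have hsub : Metric.ball x ε ⊆ {y | ¬ ((‖(f' y)⁻¹‖₊ : ℝ≥0∞) ≤ M)} := by
    intro y hy
    obtain ⟨h1, _⟩ := hball hy
    simp only [Set.mem_setOf_eq, not_le]
    calc M < (r : ℝ≥0∞) := hMr
    _ ≤ (‖(f' y)⁻¹‖₊ : ℝ≥0∞) := by
        rw [ENNReal.coe_le_coe, ← NNReal.coe_le_coe]
        simp only [coe_nnnorm, Real.norm_eq_abs]
        exact h1.le
  have h0 : (volume.restrict (Set.Ioo c d)) (Metric.ball x ε) = 0 :=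
    measure_mono_null hsub (ae_iff.1 hae)
  rw [Measure.restrict_apply measurableSet_ball] at h0
  have : Metric.ball x ε ∩ Set.Ioo c d = Metric.ball x ε := by
    apply Set.inter_eq_self_of_subset_left
    exact fun y hy => (hball hy).2
  rw [this] at h0
  exact (Metric.measure_ball_pos volume x hε).ne' h0

private lemma vol_le {c d : ℝ} (hcd : c < d) (f f' : ℝ → ℝ)
    (hderiv : ∀ x ∈ Set.Ioo c d, HasDerivAt f (f' x) x)
    (hcont : ContinuousOn f' (Set.Ioo c d)) (hinj : Set.InjOn f (Set.Ioo c d))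
    (hM : supNormE (fun x => (f' x)⁻¹) (Set.Ioo c d) < 1) :
    volume (Set.Ioo c d) ≤
      supNormE (fun x => (f' x)⁻¹) (Set.Ioo c d) * volume (f '' Set.Ioo c d) := by
  set M := supNormE (fun x => (f' x)⁻¹) (Set.Ioo c d) with hMdef
  have hdich := dichotomy f' hcont M le_rfl
  -- f is continuous on Ioo c d
  have hfc : ContinuousOn f (Set.Ioo c d) := fun x hx =>
    (hderiv x hx).continuousAt.continuousWithinAt
  -- rule out f' vanishing anywhere
  have hz : ∀ x ∈ Set.Ioo c d, f' x ≠ 0 := by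
    intro x₀ hx₀ hzero
    -- first, f' cannot vanish somewhere and be nonzero elsewhere (IVT)
    have hall : ∀ x ∈ Set.Ioo c d, f' x = 0 := by
      intro x₁ hx₁
      by_contra hne
      -- intermediate value: find w with 0 < |w| ≤ 1/2 in the image of f'
      have hpre : IsPreconnected (Set.Ioo c d) := isPreconnected_Ioo
      have hw : ∃ w ∈ f' '' Set.Ioo c d, w ≠ 0 ∧ |w| ≤ 1/2 := by
        rcases lt_or_gt_of_ne hne with hneg | hpos
        · have : Set.Icc (f' x₁) (f' x₀) ⊆ f' '' Set.Ioo c d :=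
            hpre.intermediate_value hx₁ hx₀ hcont
          refine ⟨max (f' x₁) (-(1/2)), this ⟨le_max_left _ _, ?_⟩, ?_, ?_⟩
          · rw [hzero]; exact max_le hneg.le (by norm_num)
          · have : max (f' x₁) (-(1/2)) < 0 := max_lt hneg (by norm_num)
            exact this.ne
          · rw [abs_of_neg (max_lt hneg (by norm_num))]
            have := le_max_right (f' x₁) (-(1/2))
            linarith
        · have : Set.Icc (f' x₀) (f' x₁) ⊆ f' '' Set.Ioo c d :=
            hpre.intermediate_value hx₀ hx₁ hcont
          refine ⟨min (f' x₁) (1/2), this ⟨?_, min_le_left _ _⟩, ?_, ?_⟩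
          · rw [hzero]; exact le_min hpos.le (by norm_num)
          · exact (lt_min hpos (by norm_num)).ne'
          · rw [abs_of_pos (lt_min hpos (by norm_num))]
            exact min_le_right _ _
      obtain ⟨w, ⟨y, hy, hyw⟩, hw0, hwle⟩ := hw
      rcases hdich y hy with h0 | hle
      · rw [hyw] at h0; exact hw0 h0
      · -- ‖w⁻¹‖ ≥ 2 > 1 > M
        have h2 : (2 : ℝ≥0∞) ≤ (‖(f' y)⁻¹‖₊ : ℝ≥0∞) := by
          have hn : (2 : ℝ) ≤ ‖(f' y)⁻¹‖ := by
            simp only [Real.norm_eq_abs, abs_inv, hyw]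
            rw [le_inv_comm₀ (by norm_num) (abs_pos.2 hw0)]
            linarith
          have hn' : (2 : NNReal) ≤ ‖(f' y)⁻¹‖₊ := by
            rw [← NNReal.coe_le_coe]; simpa using hn
          exact_mod_cast hn'
        have : (2 : ℝ≥0∞) ≤ M := h2.trans hle
        exact absurd (this.trans_lt hM) (by norm_num)
    -- all derivative zero: contradicts injectivity via MVT
    set p := c + (d - c)/4 with hp
    set q := d - (d - c)/4 with hq
    have hpq : p < q := by rw [hp, hq]; linarith
    have hsub : Set.Icc p q ⊆ Set.Ioo c d := by
      intro y hy
      constructor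
      · calc c < p := by rw [hp]; linarith
          _ ≤ y := hy.1
      · calc y ≤ q := hy.2
          _ < d := by rw [hq]; linarith
    obtain ⟨ξ, hξ, hslope⟩ := exists_hasDerivAt_eq_slope f f' hpq
      (hfc.mono hsub)
      (fun y hy => hderiv y (hsub (Set.Ioo_subset_Icc_self hy)))
    rw [hall ξ (hsub (Set.Ioo_subset_Icc_self hξ))] at hslope
    have : f q = f p := by
      rcases div_eq_zero_iff.mp hslope.symm with h | h
      · linarith [sub_eq_zero.mp h]
      · exact absurd (sub_eq_zero.mp h) hpq.ne'
    have := hinj (hsub (Set.right_mem_Icc.2 hpq.le)) (hsub (Set.left_mem_Icc.2 hpq.le)) this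
    exact hpq.ne' this
  -- main case: |f'| ≥ M⁻¹ everywhere
  have key : ∀ x ∈ Set.Ioo c d, M⁻¹ ≤ ENNReal.ofReal |f' x| := by
    intro x hx
    rcases hdich x hx with h0 | hle
    · exact absurd h0 (hz x hx)
    · have h1 : ENNReal.ofReal |f' x| = ((‖(f' x)⁻¹‖₊ : ℝ≥0∞))⁻¹ := by
        rw [nnnorm_inv, ENNReal.coe_inv (by simpa using hz x hx), inv_inv]
        rw [← Real.norm_eq_abs, ofReal_norm, enorm_eq_nnnorm]
      rw [h1]
      exact ENNReal.inv_le_inv' hle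
  have hMne0 : M ≠ 0 := by
    intro h0
    have := key (c + (d - c)/2) (by constructor <;> [linarith; linarith])
    rw [h0, ENNReal.inv_zero] at this
    exact (ENNReal.ofReal_lt_top.not_ge) this
  have hMnetop : M ≠ ⊤ := hM.ne_top
  -- change of variables
  have hcov : volume (f '' Set.Ioo c d) = ∫⁻ x in Set.Ioo c d, ENNReal.ofReal |f' x| := by
    have := lintegral_image_eq_lintegral_abs_det_fderiv_mul volume measurableSet_Ioo
      (fun x hx => ((hderiv x hx).hasDerivWithinAt).hasFDerivWithinAt) hinj (fun _ => 1)
    simpa [ContinuousLinearMap.det_toSpanSingleton] using this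
  have hlow : M⁻¹ * volume (Set.Ioo c d) ≤ volume (f '' Set.Ioo c d) := by
    rw [hcov, ← setLIntegral_const (Set.Ioo c d) M⁻¹]
    refine lintegral_mono_ae ?_
    exact (ae_restrict_iff' measurableSet_Ioo).2 (Filter.Eventually.of_forall key)
  calc volume (Set.Ioo c d) = M * (M⁻¹ * volume (Set.Ioo c d)) := by
        rw [← mul_assoc, ENNReal.mul_inv_cancel hMne0 hMnetop, one_mul]
    _ ≤ M * volume (f '' Set.Ioo c d) := mul_le_mul_right hlow _

/-- **exponential tails.** For a suspension semiflow `(Ω, f, τ)` with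
`‖1/f'‖_{L∞(Ω)} < 1` and (H3): `Σ_i ‖1/f'‖_{L∞(ω_i)} e^{σ‖τ‖_{L∞(ω_i)}} < ∞`, one has
`∫_Ω e^{στ(x)} dx < ∞`. -/
theorem exponential_tails
    (a b : ℝ) (hab : a < b) (Ω : Set ℝ) (hΩ : Ω = Set.Ioo a b)
    (I : Type) [Countable I] (ω : I → Set ℝ)
    (hω_sub : ∀ i, ω i ⊆ Ω)
    (hω_int : ∀ i, ∃ c d : ℝ, c < d ∧ ω i = Set.Ioo c d)
    (hω_disj : Pairwise (Function.onFun Disjoint ω))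
    (hω_full : volume (Ω \ ⋃ i, ω i) = 0)
    (f f' : ℝ → ℝ)
    (hf_deriv : ∀ i, ∀ x ∈ ω i, HasDerivAt f (f' x) x)
    (hf_cont : ∀ i, ContinuousOn f' (ω i))
    (hf_inj : ∀ i, Set.InjOn f (ω i))
    (hf_into : ∀ i, f '' ω i ⊆ Ω)
    (hf_exp : supNormE (fun x => (f' x)⁻¹) Ω < 1)
    (τ : ℝ → ℝ) (hτ_cont : ContinuousOn τ Ω) (hτ_pos : ∀ x ∈ Ω, 0 < τ x)
    (hτ_int : IntegrableOn τ Ω)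
    (σ : ℝ) (hσ : 0 < σ)
    -- (H3)
    (hH3 : ∑' i : I, supNormE (fun x => (f' x)⁻¹) (ω i) *
        eexp (ENNReal.ofReal σ * supNormE τ (ω i)) < ⊤) :
    ∫⁻ x in Ω, ENNReal.ofReal (Real.exp (σ * τ x)) < ⊤ := by
  classical
  have hvolΩ : volume Ω = ENNReal.ofReal (b - a) := by rw [hΩ, Real.volume_Ioo]
  have hMle : ∀ i, supNormE (fun x => (f' x)⁻¹) (ω i) ≤ supNormE (fun x => (f' x)⁻¹) Ω :=
    fun i => essSup_mono_measure' (Measure.restrict_mono (hω_sub i) le_rfl)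
  have hMlt : ∀ i, supNormE (fun x => (f' x)⁻¹) (ω i) < 1 := fun i => (hMle i).trans_lt hf_exp
  have hae : Ω =ᵐ[volume] ⋃ i, ω i := by
    rw [ae_eq_set]
    refine ⟨hω_full, ?_⟩
    rw [Set.diff_eq_empty.mpr (Set.iUnion_subset hω_sub)]
    exact measure_empty
  rw [setLIntegral_congr hae]
  refine lt_of_le_of_lt (lintegral_iUnion_le _ _) ?_
  have hterm : ∀ i, ∫⁻ x in ω i, ENNReal.ofReal (Real.exp (σ * τ x)) ≤
      (supNormE (fun x => (f' x)⁻¹) (ω i) * eexp (ENNReal.ofReal σ * supNormE τ (ω i))) *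
        ENNReal.ofReal (b - a) := by
    intro i
    obtain ⟨c, d, hcd, hωi⟩ := hω_int i
    set M := supNormE (fun x => (f' x)⁻¹) (ω i) with hMdef
    set T := supNormE τ (ω i) with hTdef
    set E := eexp (ENNReal.ofReal σ * T) with hEdef
    have hpt : ∀ᵐ x ∂(volume.restrict (ω i)), ENNReal.ofReal (Real.exp (σ * τ x)) ≤ E := by
      by_cases hT : T = ⊤
      · have : E = ⊤ := by
          rw [hEdef, hT, ENNReal.mul_top (ENNReal.ofReal_pos.2 hσ).ne']
          simp [eexp]
        simp [this]
      · have hle := ae_le_essSup (fun x => (‖τ x‖₊ : ℝ≥0∞)) (μ := volume.restrict (ω i))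
        filter_upwards [hle] with x hx
        have hxr : |τ x| ≤ T.toReal := by
          have h2 : ((‖τ x‖₊ : ℝ≥0∞)).toReal ≤ T.toReal := ENNReal.toReal_mono hT hx
          simpa [Real.norm_eq_abs] using h2
        have hE : E = ENNReal.ofReal (Real.exp (σ * T.toReal)) := by
          rw [hEdef, eexp, if_neg (ENNReal.mul_ne_top ENNReal.ofReal_ne_top hT),
            ENNReal.toReal_mul, ENNReal.toReal_ofReal hσ.le]
        rw [hE]
        apply ENNReal.ofReal_le_ofReal
        apply Real.exp_le_exp.2
        exact mul_le_mul_of_nonneg_left ((le_abs_self _).trans hxr) hσ.le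
    have hvol : volume (ω i) ≤ M * ENNReal.ofReal (b - a) := by
      have h1 : volume (Set.Ioo c d) ≤
          supNormE (fun x => (f' x)⁻¹) (Set.Ioo c d) * volume (f '' Set.Ioo c d) :=
        vol_le hcd f f' (hωi ▸ hf_deriv i) (hωi ▸ hf_cont i) (hωi ▸ hf_inj i) (hωi ▸ hMlt i)
      rw [← hωi] at h1
      refine h1.trans (mul_le_mul_right ?_ _)
      rw [← hvolΩ]
      exact measure_mono (hf_into i)
    calc ∫⁻ x in ω i, ENNReal.ofReal (Real.exp (σ * τ x)) ≤ ∫⁻ _ in ω i, E :=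
          lintegral_mono_ae hpt
      _ = E * volume (ω i) := setLIntegral_const _ _
      _ ≤ E * (M * ENNReal.ofReal (b - a)) := mul_le_mul_right hvol _
      _ = (M * E) * ENNReal.ofReal (b - a) := by ring
  calc ∑' i, ∫⁻ x in ω i, ENNReal.ofReal (Real.exp (σ * τ x)) ≤
      ∑' i, (supNormE (fun x => (f' x)⁻¹) (ω i) *
        eexp (ENNReal.ofReal σ * supNormE τ (ω i))) * ENNReal.ofReal (b - a) :=
        ENNReal.tsum_le_tsum hterm
    _ = (∑' i, supNormE (fun x => (f' x)⁻¹) (ω i) *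
        eexp (ENNReal.ofReal σ * supNormE τ (ω i))) * ENNReal.ofReal (b - a) :=
        ENNReal.tsum_mul_right
    _ < ⊤ := ENNReal.mul_lt_top hH3 ENNReal.ofReal_lt_top
end
end

section
/- Let (Ω, f, τ) satisfy the suspension semiflow assumptions, let h₀ ∈ L¹(Ω) be nonnegative, and let u, v : Ω_τ → ℂ be bounded measurable, where Ω_τ := {(x,s) : x ∈ ⋃_i ω_i, 0 ≤ s < τ(x)}. For t ≥ 0 define ρ(t) := Σ_{n≥1} ∫_Ω ∫₀^{τ(x)} 1_{[τ_n(x)−s, τ_{n+1}(x)−s)}(t) · u(x,s) · v(f^n(x), s + t − τ_n(x)) · h₀(x) ds dx. Then for every z ∈ ℂ with Re z > 0, ∫₀^∞ e^{−zt} ρ(t) dt = Σ_{n=1}^∞ ∫_Ω h₀(x) · û_{−z}(x) · e^{−zτ_n(x)} · v̂_z(f^n(x)) dx, where for w : Ω_τ → ℂ and ζ ∈ ℂ, ŵ_ζ(x) := ∫₀^{τ(x)} e^{−ζs} w(x,s) ds. -/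
open MeasureTheory Set ENNReal

noncomputable section

/-- The Birkhoff sums `τ_n := Σ_{k<n} τ ∘ f^k` of the return time. -/
def birk (f τ : ℝ → ℝ) (n : ℕ) (x : ℝ) : ℝ := ∑ k ∈ Finset.range n, τ (f^[k] x)

/-- `ρ(t) := Σ_{n≥1} ∫_Ω ∫₀^{τ(x)} 1_{[τ_n(x)-s, τ_{n+1}(x)-s)}(t) · u(x,s) ·
v(fⁿ x, s+t-τ_n(x)) · h₀(x) ds dx`. -/
def rhoFn (Ω : Set ℝ) (f τ : ℝ → ℝ) (h₀ : ℝ → ℝ) (u v : ℝ × ℝ → ℂ) (t : ℝ) : ℂ :=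
  ∑' n : ℕ, ∫ x in Ω,
    (∫ s in Ioo 0 (τ x),
      if birk f τ (n + 1) x - s ≤ t ∧ t < birk f τ (n + 2) x - s
      then u (x, s) * v (f^[n + 1] x, s + t - birk f τ (n + 1) x) else 0) * (h₀ x : ℂ)

/-- `ŵ_ζ(x) := ∫₀^{τ(x)} e^{-ζ s} w(x,s) ds`. -/
def hatObs (τ : ℝ → ℝ) (w : ℝ × ℝ → ℂ) (ζ : ℂ) (x : ℝ) : ℂ :=
  ∫ s in Ioo 0 (τ x), Complex.exp (-ζ * s) * w (x, s)

namespace LapAux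

lemma expInt (c : ℝ) (hc : c ≠ 0) {p q : ℝ} (hpq : p ≤ q) :
    ∫ t in Ioo p q, Real.exp (c * t) = (Real.exp (c * q) - Real.exp (c * p)) / c := by
  have h : ∀ t ∈ Set.uIcc p q, HasDerivAt (fun t => Real.exp (c * t) / c) (Real.exp (c * t)) t := by
    intro t _
    have h1 : HasDerivAt (fun t : ℝ => c * t) c t := by
      simpa using (hasDerivAt_id t).const_mul c
    have h2 := (Real.hasDerivAt_exp (c * t)).comp t h1
    have h3 := h2.div_const c
    exact h3.congr_deriv (by field_simp)
  have hint : IntervalIntegrable (fun t => Real.exp (c * t)) volume p q :=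
    (Real.continuous_exp.comp (continuous_const.mul continuous_id)).intervalIntegrable p q
  have heq := intervalIntegral.integral_eq_sub_of_hasDerivAt h hint
  rw [intervalIntegral.integral_of_le hpq, MeasureTheory.integral_Ioc_eq_integral_Ioo] at heq
  rw [heq]
  ring

lemma tcalc (z : ℂ) {p L : ℝ} (hp : 0 < p) (w : ℝ → ℂ) :
    (∫ t in Ioi (0:ℝ), if p ≤ t ∧ t < p + L then Complex.exp (-z * t) * w (t - p) else 0)
      = Complex.exp (-z * p) * ∫ r in Ioo 0 L, Complex.exp (-z * r) * w r := by
  have h1 : (fun t : ℝ => if p ≤ t ∧ t < p + L then Complex.exp (-z * t) * w (t - p) else 0)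
      = (Ico p (p + L)).indicator (fun t => Complex.exp (-z * t) * w (t - p)) := by
    funext t
    simp [Set.indicator_apply, Set.mem_Ico]
  have hsub : Ioi (0:ℝ) ∩ Ico p (p + L) = Ico p (p + L) :=
    inter_eq_self_of_subset_right (fun t ht => lt_of_lt_of_le hp ht.1)
  rw [h1, setIntegral_indicator measurableSet_Ico, hsub,
    integral_Ico_eq_integral_Ioo, ← integral_indicator measurableSet_Ioo]
  have h2 : (∫ t : ℝ, (Ioo p (p+L)).indicator (fun t => Complex.exp (-z * t) * w (t - p)) t)
      = ∫ r : ℝ, (Ioo p (p+L)).indicator (fun t => Complex.exp (-z * t) * w (t - p)) (r + p) :=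
    (integral_add_right_eq_self _ p).symm
  rw [h2]
  have h3 : ∀ r : ℝ, (Ioo p (p+L)).indicator (fun t => Complex.exp (-z * t) * w (t - p)) (r + p)
      = (Ioo 0 L).indicator (fun r => Complex.exp (-z * p) * (Complex.exp (-z * r) * w r)) r := by
    intro r
    by_cases hr : r ∈ Ioo 0 L
    · have hmem : r + p ∈ Ioo p (p + L) := ⟨by linarith [hr.1], by linarith [hr.2]⟩
      rw [Set.indicator_of_mem hmem, Set.indicator_of_mem hr]
      have e1 : (-z * ↑(r + p)) = -z * ↑r + -z * ↑p := by push_cast; ring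
      have e2 : r + p - p = r := by ring
      rw [e1, Complex.exp_add, e2]
      ring
    · have hmem : r + p ∉ Ioo p (p + L) := by
        simp only [Set.mem_Ioo, not_and_or, not_lt] at hr ⊢
        rcases hr with h | h
        · left; linarith
        · right; linarith
      rw [Set.indicator_of_notMem hmem, Set.indicator_of_notMem hr]
  simp only [h3]
  rw [integral_indicator measurableSet_Ioo, integral_const_mul]

lemma measurable_ite_of_continuousOn {g : ℝ → ℝ} {U : Set ℝ} [DecidablePred (· ∈ U)]
    (hU : IsOpen U) (hg : ContinuousOn g U) (c : ℝ) :
    Measurable (fun x => if x ∈ U then g x else c) := by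
  apply measurable_of_isOpen
  intro V hV
  by_cases hc : c ∈ V
  · have h : (fun x => if x ∈ U then g x else c) ⁻¹' V = (U ∩ g ⁻¹' V) ∪ Uᶜ := by
      ext x; by_cases hx : x ∈ U <;> simp [hx, hc]
    rw [h]
    exact ((hg.isOpen_inter_preimage hU hV).measurableSet).union hU.measurableSet.compl
  · have h : (fun x => if x ∈ U then g x else c) ⁻¹' V = U ∩ g ⁻¹' V := by
      ext x; by_cases hx : x ∈ U <;> simp [hx, hc]
    rw [h]
    exact (hg.isOpen_inter_preimage hU hV).measurableSet

lemma birk_succ (f τ : ℝ → ℝ) (n : ℕ) (x : ℝ) :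
    birk f τ (n+1) x = birk f τ n x + τ (f^[n] x) := Finset.sum_range_succ _ n

lemma birk_one (f τ : ℝ → ℝ) (x : ℝ) : birk f τ 1 x = τ x := by
  simp [birk]

lemma measurable_birk {f τ : ℝ → ℝ} (hf : Measurable f) (hτ : Measurable τ) (n : ℕ) :
    Measurable (birk f τ n) :=
  Finset.measurable_sum _ (fun k _ => hτ.comp (hf.iterate k))

def Kfun (fm τm : ℝ → ℝ) (u v : ℝ × ℝ → ℂ) (n : ℕ) (x s t : ℝ) : ℂ :=
  if 0 < s ∧ s < τm x ∧ birk fm τm (n+1) x - s ≤ t ∧ t < birk fm τm (n+2) x - s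
  then u (x, s) * v (fm^[n+1] x, s + t - birk fm τm (n+1) x) else 0

lemma measurable_Kfun {fm τm : ℝ → ℝ} {u v : ℝ × ℝ → ℂ}
    (hfm : Measurable fm) (hτm : Measurable τm) (hu : Measurable u) (hv : Measurable v) (n : ℕ) :
    Measurable (fun q : ℝ × ℝ × ℝ => Kfun fm τm u v n q.1 q.2.1 q.2.2) := by
  have mX : Measurable (fun q : ℝ × ℝ × ℝ => q.1) := measurable_fst
  have mS : Measurable (fun q : ℝ × ℝ × ℝ => q.2.1) := measurable_fst.comp measurable_snd
  have mT : Measurable (fun q : ℝ × ℝ × ℝ => q.2.2) := measurable_snd.comp measurable_snd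
  unfold Kfun
  apply Measurable.ite
  · simp only [Set.setOf_and]
    exact (measurableSet_lt measurable_const mS).inter
      ((measurableSet_lt mS (hτm.comp mX)).inter
        ((measurableSet_le (((measurable_birk hfm hτm (n+1)).comp mX).sub mS) mT).inter
          (measurableSet_lt mT (((measurable_birk hfm hτm (n+2)).comp mX).sub mS))))
  · exact (hu.comp (mX.prodMk mS)).mul
      (hv.comp (((hfm.iterate (n+1)).comp mX).prodMk
        ((mS.add mT).sub ((measurable_birk hfm hτm (n+1)).comp mX))))
  · exact measurable_const

section Bounds

variable {fm τm : ℝ → ℝ} {u v : ℝ × ℝ → ℂ} {Mu Mv : ℝ} {z : ℂ}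

lemma norm_Kfun_le (hub : ∀ p, ‖u p‖ ≤ Mu) (hvb : ∀ p, ‖v p‖ ≤ Mv) (hMu0 : 0 ≤ Mu)
    (hMv0 : 0 ≤ Mv) (n : ℕ) (x s t : ℝ) : ‖Kfun fm τm u v n x s t‖ ≤ Mu * Mv := by
  unfold Kfun
  split_ifs with h
  · exact norm_mul_le _ _ |>.trans (mul_le_mul (hub _) (hvb _) (norm_nonneg _) hMu0)
  · simpa using mul_nonneg hMu0 hMv0

lemma birk_le (hτpos : ∀ y, 0 < τm y) (n : ℕ) (x : ℝ) : τm x ≤ birk fm τm (n+1) x := by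
  induction n with
  | zero => rw [birk_one]
  | succ n ih =>
    rw [birk_succ fm τm (n+1) x]
    have := hτpos (fm^[n+1] x)
    linarith

lemma birk_mono (hτpos : ∀ y, 0 < τm y) (n : ℕ) (x : ℝ) :
    birk fm τm (n+1) x ≤ birk fm τm (n+2) x := by
  rw [birk_succ fm τm (n+1) x]
  have := hτpos (fm^[n+1] x)
  linarith

lemma tbound (hub : ∀ p, ‖u p‖ ≤ Mu) (hvb : ∀ p, ‖v p‖ ≤ Mv) (hMu0 : 0 ≤ Mu) (hMv0 : 0 ≤ Mv)
    (hτpos : ∀ y, 0 < τm y) (hz : 0 < z.re) (n : ℕ) (x s : ℝ) :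
    (∫⁻ t : ℝ, (‖Complex.exp (-z * t) * Kfun fm τm u v n x s t‖₊ : ℝ≥0∞))
      ≤ (Ioo 0 (τm x)).indicator (fun s' => ENNReal.ofReal ((Mu * Mv) *
          ((Real.exp (-z.re * (birk fm τm (n+1) x - s'))
            - Real.exp (-z.re * (birk fm τm (n+2) x - s'))) / z.re))) s := by
  by_cases hs : s ∈ Ioo 0 (τm x)
  · rw [Set.indicator_of_mem hs]
    have hpq : birk fm τm (n+1) x - s ≤ birk fm τm (n+2) x - s := by
      have := birk_mono (fm := fm) hτpos n x; linarith
    have hptw : ∀ t : ℝ, (‖Complex.exp (-z * t) * Kfun fm τm u v n x s t‖₊ : ℝ≥0∞)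
        ≤ (Ico (birk fm τm (n+1) x - s) (birk fm τm (n+2) x - s)).indicator
            (fun t => ENNReal.ofReal (Real.exp (-z.re * t) * (Mu * Mv))) t := by
      intro t
      by_cases hK : 0 < s ∧ s < τm x ∧ birk fm τm (n+1) x - s ≤ t ∧ t < birk fm τm (n+2) x - s
      · have ht : t ∈ Ico (birk fm τm (n+1) x - s) (birk fm τm (n+2) x - s) :=
          ⟨hK.2.2.1, hK.2.2.2⟩
        rw [Set.indicator_of_mem ht, ← enorm_eq_nnnorm, ← ofReal_norm_eq_enorm]
        apply ENNReal.ofReal_le_ofReal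
        rw [norm_mul]
        have h1 : ‖Complex.exp (-z * (t:ℂ))‖ = Real.exp (-z.re * t) := by
          rw [Complex.norm_exp]
          congr 1
          simp [Complex.mul_re]
        rw [h1]
        exact mul_le_mul_of_nonneg_left (norm_Kfun_le hub hvb hMu0 hMv0 n x s t)
          (Real.exp_pos _).le
      · have : Kfun fm τm u v n x s t = 0 := by unfold Kfun; exact if_neg hK
        simp [this]
    calc (∫⁻ t : ℝ, (‖Complex.exp (-z * t) * Kfun fm τm u v n x s t‖₊ : ℝ≥0∞))
        ≤ ∫⁻ t : ℝ, (Ico (birk fm τm (n+1) x - s) (birk fm τm (n+2) x - s)).indicator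
            (fun t => ENNReal.ofReal (Real.exp (-z.re * t) * (Mu * Mv))) t :=
          lintegral_mono hptw
      _ = ∫⁻ t in Ico (birk fm τm (n+1) x - s) (birk fm τm (n+2) x - s),
            ENNReal.ofReal (Real.exp (-z.re * t) * (Mu * Mv)) :=
          lintegral_indicator measurableSet_Ico _
      _ = ENNReal.ofReal (∫ t in Ico (birk fm τm (n+1) x - s) (birk fm τm (n+2) x - s),
            Real.exp (-z.re * t) * (Mu * Mv)) := by
          rw [← ofReal_integral_eq_lintegral_ofReal]
          · exact (((Real.continuous_exp.comp (continuous_const.mul continuous_id)).mul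
              continuous_const).integrableOn_Icc).mono_set Ico_subset_Icc_self
          · exact Filter.Eventually.of_forall fun t =>
              mul_nonneg (Real.exp_pos _).le (mul_nonneg hMu0 hMv0)
      _ = ENNReal.ofReal ((Mu * Mv) * ((Real.exp (-z.re * (birk fm τm (n+1) x - s))
            - Real.exp (-z.re * (birk fm τm (n+2) x - s))) / z.re)) := by
          congr 1
          rw [MeasureTheory.integral_Ico_eq_integral_Ioo, integral_mul_const]
          rw [expInt (-z.re) (neg_ne_zero.2 hz.ne') hpq, div_neg, ← neg_div, neg_sub]
          ring
  · rw [Set.indicator_of_notMem hs]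
    have hzero : ∀ t : ℝ, Complex.exp (-z * t) * Kfun fm τm u v n x s t = 0 := by
      intro t
      unfold Kfun
      rw [if_neg (fun hcc => hs (Set.mem_Ioo.mpr ⟨hcc.1, hcc.2.1⟩)), mul_zero]
    have hfun : (fun t : ℝ => (‖Complex.exp (-z * t) * Kfun fm τm u v n x s t‖₊ : ℝ≥0∞))
        = fun _ => 0 := by
      funext t; rw [hzero t]; simp
    rw [hfun, lintegral_zero]

lemma sbound (hub : ∀ p, ‖u p‖ ≤ Mu) (hvb : ∀ p, ‖v p‖ ≤ Mv) (hMu0 : 0 ≤ Mu) (hMv0 : 0 ≤ Mv)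
    (hτpos : ∀ y, 0 < τm y) (hz : 0 < z.re) (n : ℕ) (x : ℝ) :
    (∫⁻ s, ∫⁻ t : ℝ, (‖Complex.exp (-z * t) * Kfun fm τm u v n x s t‖₊ : ℝ≥0∞))
      ≤ ENNReal.ofReal (Mu * Mv / (z.re * z.re) *
          (Real.exp (-z.re * (birk fm τm (n+1) x - τm x))
            - Real.exp (-z.re * (birk fm τm (n+2) x - τm x)))) := by
  refine le_trans (lintegral_mono (tbound hub hvb hMu0 hMv0 hτpos hz n x)) ?_
  rw [lintegral_indicator measurableSet_Ioo]
  have hcont : Continuous (fun s : ℝ => (Mu * Mv) *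
      ((Real.exp (-z.re * (birk fm τm (n+1) x - s))
        - Real.exp (-z.re * (birk fm τm (n+2) x - s))) / z.re)) := by
    fun_prop
  have hmono := birk_mono (fm := fm) hτpos n x
  have hnn : ∀ s : ℝ, 0 ≤ (Mu * Mv) * ((Real.exp (-z.re * (birk fm τm (n+1) x - s))
      - Real.exp (-z.re * (birk fm τm (n+2) x - s))) / z.re) := by
    intro s
    apply mul_nonneg (mul_nonneg hMu0 hMv0)
    apply div_nonneg _ hz.le
    have : -z.re * (birk fm τm (n+2) x - s) ≤ -z.re * (birk fm τm (n+1) x - s) := by nlinarith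
    have := Real.exp_le_exp.2 this
    linarith
  rw [← ofReal_integral_eq_lintegral_ofReal
      (hcont.integrableOn_Icc.mono_set Ioo_subset_Icc_self)
      (Filter.Eventually.of_forall fun s => hnn s)]
  apply ENNReal.ofReal_le_ofReal
  have hrw : ∀ s : ℝ, (Mu * Mv) * ((Real.exp (-z.re * (birk fm τm (n+1) x - s))
      - Real.exp (-z.re * (birk fm τm (n+2) x - s))) / z.re)
      = ((Mu * Mv) / z.re * (Real.exp (-z.re * birk fm τm (n+1) x)
          - Real.exp (-z.re * birk fm τm (n+2) x))) * Real.exp (z.re * s) := by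
    intro s
    have e1 : -z.re * (birk fm τm (n+1) x - s) = -z.re * birk fm τm (n+1) x + z.re * s := by ring
    have e2 : -z.re * (birk fm τm (n+2) x - s) = -z.re * birk fm τm (n+2) x + z.re * s := by ring
    rw [e1, e2, Real.exp_add, Real.exp_add]
    ring
  simp_rw [hrw]
  rw [integral_const_mul, expInt z.re hz.ne' (hτpos x).le]
  set A := Real.exp (-z.re * birk fm τm (n+1) x) with hA
  set A' := Real.exp (-z.re * birk fm τm (n+2) x) with hA'
  set E := Real.exp (z.re * τm x) with hE
  have hDn : Real.exp (-z.re * (birk fm τm (n+1) x - τm x)) = A * E := by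
    rw [hA, hE, ← Real.exp_add]; congr 1; ring
  have hDn' : Real.exp (-z.re * (birk fm τm (n+2) x - τm x)) = A' * E := by
    rw [hA', hE, ← Real.exp_add]; congr 1; ring
  rw [hDn, hDn', mul_zero, Real.exp_zero]
  have ha : A' ≤ A := by
    rw [hA, hA']
    apply Real.exp_le_exp.2
    nlinarith
  have hE1 : 1 ≤ E := by
    rw [hE]
    apply Real.one_le_exp
    exact mul_nonneg hz.le (hτpos x).le
  have key : (A - A') * (E - 1) ≤ A * E - A' * E := by nlinarith
  have hc2 : 0 ≤ Mu * Mv / (z.re * z.re) := by positivity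
  calc Mu * Mv / z.re * (A - A') * ((E - 1) / z.re)
      = Mu * Mv / (z.re * z.re) * ((A - A') * (E - 1)) := by ring
    _ ≤ Mu * Mv / (z.re * z.re) * (A * E - A' * E) := mul_le_mul_of_nonneg_left key hc2
    _ = Mu * Mv / (z.re * z.re) * (A * E - A' * E) := rfl

end Bounds


section Key

variable {fm τm : ℝ → ℝ} {u v : ℝ × ℝ → ℂ} {Mu Mv : ℝ} {z : ℂ}

lemma hatObs_neg (τm : ℝ → ℝ) (u : ℝ × ℝ → ℂ) (z : ℂ) (x : ℝ) :
    hatObs τm u (-z) x = ∫ s in Ioo 0 (τm x), Complex.exp (z * s) * u (x, s) := by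
  simp [hatObs]

lemma keyfubini (Ωm : Set ℝ) (h₀ : ℝ → ℝ)
    (hfm : Measurable fm) (hτm : Measurable τm) (hτpos : ∀ y, 0 < τm y)
    (hu : Measurable u) (hv : Measurable v)
    (hub : ∀ p, ‖u p‖ ≤ Mu) (hvb : ∀ p, ‖v p‖ ≤ Mv) (hMu0 : 0 ≤ Mu) (hMv0 : 0 ≤ Mv)
    (hz : 0 < z.re) (n : ℕ)
    (hF1int : Integrable (Function.uncurry fun (t x : ℝ) =>
        Complex.exp (-z * t) * ((∫ s, Kfun fm τm u v n x s t) * (h₀ x : ℂ)))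
      ((volume.restrict (Ioi 0)).prod (volume.restrict Ωm))) :
    (∫ t in Ioi (0:ℝ), Complex.exp (-z * t) *
        ∫ x in Ωm, (∫ s, Kfun fm τm u v n x s t) * (h₀ x : ℂ))
      = ∫ x in Ωm, (h₀ x : ℂ) * hatObs τm u (-z) x *
          Complex.exp (-z * birk fm τm (n+1) x) * hatObs τm v z (fm^[n+1] x) := by
  have hF2int : ∀ x : ℝ, Integrable (Function.uncurry fun (t s : ℝ) =>
      Complex.exp (-z * t) * Kfun fm τm u v n x s t)
      ((volume.restrict (Ioi 0)).prod volume) := by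
    intro x
    have hgint : Integrable (fun q : ℝ × ℝ =>
        Real.exp (-z.re * q.1) * (Ioo 0 (τm x)).indicator (fun _ => Mu * Mv) q.2)
        ((volume.restrict (Ioi 0)).prod volume) := by
      have h1 : Integrable (fun t : ℝ => Real.exp (-z.re * t)) (volume.restrict (Ioi 0)) :=
        exp_neg_integrableOn_Ioi 0 hz
      have h2 : Integrable (fun s : ℝ => (Ioo 0 (τm x)).indicator (fun _ => Mu * Mv) s) volume := by
        rw [integrable_indicator_iff measurableSet_Ioo]
        exact integrableOn_const (by rw [Real.volume_Ioo]; exact ofReal_ne_top)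
      exact Integrable.mul_prod h1 h2
    apply hgint.mono'
    · have mKx : Measurable (fun q : ℝ × ℝ => Kfun fm τm u v n x q.2 q.1) :=
        (measurable_Kfun hfm hτm hu hv n).comp
          (measurable_const.prodMk (measurable_snd.prodMk measurable_fst))
      exact ((Complex.measurable_exp.comp
        ((Complex.measurable_ofReal.comp measurable_fst).const_mul (-z))).mul
          mKx).aestronglyMeasurable
    · refine Filter.Eventually.of_forall fun q => ?_
      rw [Function.uncurry_apply_pair, norm_mul]
      have h1 : ‖Complex.exp (-z * (q.1:ℝ))‖ = Real.exp (-z.re * q.1) := by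
        rw [Complex.norm_exp]; congr 1; simp [Complex.mul_re]
      rw [h1]
      by_cases hK : 0 < q.2 ∧ q.2 < τm x ∧ birk fm τm (n+1) x - q.2 ≤ q.1 ∧
          q.1 < birk fm τm (n+2) x - q.2
      · have hmem : q.2 ∈ Ioo 0 (τm x) := ⟨hK.1, hK.2.1⟩
        rw [Set.indicator_of_mem hmem]
        exact mul_le_mul_of_nonneg_left (norm_Kfun_le hub hvb hMu0 hMv0 n x q.2 q.1)
          (Real.exp_pos _).le
      · have hzero : Kfun fm τm u v n x q.2 q.1 = 0 := by unfold Kfun; exact if_neg hK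
        rw [hzero, norm_zero, mul_zero]
        exact mul_nonneg (Real.exp_pos _).le
          (Set.indicator_nonneg (fun _ _ => mul_nonneg hMu0 hMv0) _)
  calc (∫ t in Ioi (0:ℝ), Complex.exp (-z * t) *
          ∫ x in Ωm, (∫ s, Kfun fm τm u v n x s t) * (h₀ x : ℂ))
      = ∫ t in Ioi (0:ℝ), ∫ x in Ωm,
          Complex.exp (-z * t) * ((∫ s, Kfun fm τm u v n x s t) * (h₀ x : ℂ)) := by
        refine setIntegral_congr_fun measurableSet_Ioi (fun t _ => ?_)
        rw [integral_const_mul]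
    _ = ∫ x in Ωm, ∫ t in Ioi (0:ℝ),
          Complex.exp (-z * t) * ((∫ s, Kfun fm τm u v n x s t) * (h₀ x : ℂ)) :=
        integral_integral_swap hF1int
    _ = ∫ x in Ωm, (h₀ x : ℂ) * hatObs τm u (-z) x *
          Complex.exp (-z * birk fm τm (n+1) x) * hatObs τm v z (fm^[n+1] x) := by
        refine integral_congr_ae (Filter.Eventually.of_forall fun x => ?_)
        beta_reduce
        have e1 : ∀ t : ℝ, Complex.exp (-z * t) * ((∫ s, Kfun fm τm u v n x s t) * (h₀ x : ℂ))
            = (∫ s, Complex.exp (-z * t) * Kfun fm τm u v n x s t) * (h₀ x : ℂ) := by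
          intro t; rw [integral_const_mul]; ring
        rw [setIntegral_congr_fun measurableSet_Ioi (fun t _ => e1 t), integral_mul_const,
          integral_integral_swap (hF2int x)]
        have hInner : ∀ s : ℝ,
            (∫ t in Ioi (0:ℝ), Complex.exp (-z * t) * Kfun fm τm u v n x s t)
            = (Ioo 0 (τm x)).indicator (fun s' => u (x, s') *
                (Complex.exp (-z * ((birk fm τm (n+1) x - s' : ℝ) : ℂ)) *
                  hatObs τm v z (fm^[n+1] x))) s := by
          intro s
          by_cases hs : s ∈ Ioo 0 (τm x)
          · rw [Set.indicator_of_mem hs]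
            obtain ⟨hs1, hs2⟩ := hs
            have hp : 0 < birk fm τm (n+1) x - s := by
              have := birk_le (fm := fm) hτpos n x; linarith
            have hq : birk fm τm (n+2) x - s = (birk fm τm (n+1) x - s) + τm (fm^[n+1] x) := by
              rw [birk_succ fm τm (n+1) x]; ring
            have hcondEq : ∀ t : ℝ, Complex.exp (-z * t) * Kfun fm τm u v n x s t
                = if (birk fm τm (n+1) x - s) ≤ t ∧
                      t < (birk fm τm (n+1) x - s) + τm (fm^[n+1] x)
                  then Complex.exp (-z * t) *
                    (u (x, s) * v (fm^[n+1] x, t - (birk fm τm (n+1) x - s)))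
                  else 0 := by
              intro t
              unfold Kfun
              by_cases hc : birk fm τm (n+1) x - s ≤ t ∧ t < birk fm τm (n+2) x - s
              · rw [if_pos ⟨hs1, hs2, hc⟩, if_pos (by rw [← hq]; exact hc)]
                have harg : s + t - birk fm τm (n+1) x = t - (birk fm τm (n+1) x - s) := by
                  ring
                rw [harg]
              · rw [if_neg (fun hcc => hc ⟨hcc.2.2.1, hcc.2.2.2⟩), mul_zero,
                  if_neg (fun hcc => hc ⟨hcc.1, by rw [hq]; exact hcc.2⟩)]
            rw [setIntegral_congr_fun measurableSet_Ioi (fun t _ => hcondEq t),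
              tcalc z hp (fun r => u (x, s) * v (fm^[n+1] x, r))]
            have e3 : ∀ r : ℝ, Complex.exp (-z * (r:ℝ)) * (u (x, s) * v (fm^[n+1] x, r))
                = u (x, s) * (Complex.exp (-z * (r:ℝ)) * v (fm^[n+1] x, r)) := fun r => by ring
            simp_rw [e3]
            rw [integral_const_mul]
            unfold hatObs
            ring
          · rw [Set.indicator_of_notMem hs]
            have hzero : ∀ t : ℝ, Complex.exp (-z * t) * Kfun fm τm u v n x s t = 0 := by
              intro t; unfold Kfun
              rw [if_neg (fun hcc => hs (Set.mem_Ioo.mpr ⟨hcc.1, hcc.2.1⟩)), mul_zero]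
            rw [setIntegral_congr_fun measurableSet_Ioi (fun t _ => hzero t)]
            simp
        have hred : (∫ s, ∫ t in Ioi (0:ℝ), Complex.exp (-z * t) * Kfun fm τm u v n x s t)
            = ∫ s in Ioo 0 (τm x), u (x, s) *
                (Complex.exp (-z * ((birk fm τm (n+1) x - s : ℝ) : ℂ)) *
                  hatObs τm v z (fm^[n+1] x)) := by
          rw [← integral_indicator measurableSet_Ioo]
          exact integral_congr_ae (Filter.Eventually.of_forall hInner)
        rw [hred]
        have e2 : ∀ s : ℝ, u (x, s) * (Complex.exp (-z * ((birk fm τm (n+1) x - s : ℝ) : ℂ)) *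
              hatObs τm v z (fm^[n+1] x))
            = (Complex.exp (-z * (birk fm τm (n+1) x : ℝ)) * hatObs τm v z (fm^[n+1] x)) *
                (Complex.exp (z * (s : ℝ)) * u (x, s)) := by
          intro s
          have harg : (-z * ((birk fm τm (n+1) x - s : ℝ) : ℂ))
              = -z * ((birk fm τm (n+1) x : ℝ) : ℂ) + z * ((s : ℝ) : ℂ) := by
            push_cast; ring
          rw [harg, Complex.exp_add]; ring
        simp_rw [e2]
        rw [integral_const_mul, ← hatObs_neg]
        ring

end Key


theorem laplace_core
    (Ωm : Set ℝ)
    (fm τm : ℝ → ℝ) (hfm : Measurable fm) (hτm : Measurable τm) (hτpos : ∀ y, 0 < τm y)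
    (h₀ : ℝ → ℝ) (hh₀m : Measurable h₀) (hh₀i : IntegrableOn h₀ Ωm)
    (u v : ℝ × ℝ → ℂ) (hu : Measurable u) (hv : Measurable v)
    (Mu Mv : ℝ) (hub : ∀ p, ‖u p‖ ≤ Mu) (hvb : ∀ p, ‖v p‖ ≤ Mv)
    (z : ℂ) (hz : 0 < z.re) :
    (∫ t in Ioi (0:ℝ), Complex.exp (-z * t) *
        ∑' n : ℕ, ∫ x in Ωm, (∫ s, Kfun fm τm u v n x s t) * (h₀ x : ℂ))
      = ∑' n : ℕ, ∫ x in Ωm,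
          (h₀ x : ℂ) * hatObs τm u (-z) x * Complex.exp (-z * birk fm τm (n+1) x) *
            hatObs τm v z (fm^[n+1] x) := by
  have hMu0 : 0 ≤ Mu := le_trans (norm_nonneg _) (hub (0, 0))
  have hMv0 : 0 ≤ Mv := le_trans (norm_nonneg _) (hvb (0, 0))
  -- measurability building blocks
  have mK : ∀ n, Measurable (fun q : ℝ × ℝ × ℝ => Kfun fm τm u v n q.1 q.2.1 q.2.2) :=
    measurable_Kfun hfm hτm hu hv
  have mKtx : ∀ n, Measurable (fun q : (ℝ × ℝ) × ℝ => Kfun fm τm u v n q.1.2 q.2 q.1.1) :=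
    fun n => (mK n).comp ((measurable_snd.comp measurable_fst).prodMk
      (measurable_snd.prodMk (measurable_fst.comp measurable_fst)))
  have mI : ∀ n, StronglyMeasurable (fun q : ℝ × ℝ => ∫ s, Kfun fm τm u v n q.2 s q.1) :=
    fun n => (mKtx n).stronglyMeasurable.integral_prod_right'
  have mexp : Measurable (fun t : ℝ => Complex.exp (-z * t)) :=
    Complex.measurable_exp.comp (Complex.measurable_ofReal.const_mul (-z))
  have mh₀ : Measurable (fun x : ℝ => (h₀ x : ℂ)) := Complex.measurable_ofReal.comp hh₀m
  have mF1 : ∀ n, Measurable (fun q : ℝ × ℝ =>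
      Complex.exp (-z * q.1) * ((∫ s, Kfun fm τm u v n q.2 s q.1) * (h₀ q.2 : ℂ))) :=
    fun n => (mexp.comp measurable_fst).mul ((mI n).measurable.mul (mh₀.comp measurable_snd))
  have mJ : ∀ n, StronglyMeasurable (fun t : ℝ =>
      ∫ x in Ωm, (∫ s, Kfun fm τm u v n x s t) * (h₀ x : ℂ)) :=
    fun n => ((mI n).mul (mh₀.comp measurable_snd).stronglyMeasurable).integral_prod_right'
  have mLK : ∀ n (t : ℝ), Measurable (fun x : ℝ =>
      ∫⁻ s, (‖Kfun fm τm u v n x s t‖₊ : ℝ≥0∞)) := by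
    intro n t
    exact Measurable.lintegral_prod_right'
      (f := fun q : ℝ × ℝ => (‖Kfun fm τm u v n q.1 q.2 t‖₊ : ℝ≥0∞))
      ((mK n).comp (measurable_fst.prodMk (measurable_snd.prodMk measurable_const))).enorm
  -- norm bounds
  have hnK : ∀ n (x t : ℝ), (‖(∫ s, Kfun fm τm u v n x s t) * (h₀ x : ℂ)‖₊ : ℝ≥0∞)
      ≤ (∫⁻ s, (‖Kfun fm τm u v n x s t‖₊ : ℝ≥0∞)) * (‖h₀ x‖₊ : ℝ≥0∞) := by
    intro n x t
    rw [nnnorm_mul, ENNReal.coe_mul]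
    have h1 : ((‖((h₀ x : ℝ) : ℂ)‖₊ : ℝ≥0∞)) = ((‖h₀ x‖₊ : ℝ≥0∞)) := by
      rw [Complex.nnnorm_real]
    rw [h1]
    exact mul_le_mul_left (enorm_integral_le_lintegral_enorm _) _
  have hF1bd : ∀ n (t x : ℝ),
      (‖Complex.exp (-z * t) * ((∫ s, Kfun fm τm u v n x s t) * (h₀ x : ℂ))‖₊ : ℝ≥0∞)
      ≤ (‖Complex.exp (-z * (t : ℝ))‖₊ : ℝ≥0∞) *
          ((∫⁻ s, (‖Kfun fm τm u v n x s t‖₊ : ℝ≥0∞)) * (‖h₀ x‖₊ : ℝ≥0∞)) := by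
    intro n t x
    rw [nnnorm_mul, ENNReal.coe_mul]
    exact mul_le_mul_right (hnK n x t) _
  have hJbd : ∀ n (t : ℝ),
      (‖Complex.exp (-z * t) * ∫ x in Ωm, (∫ s, Kfun fm τm u v n x s t) * (h₀ x : ℂ)‖₊ : ℝ≥0∞)
      ≤ ∫⁻ x in Ωm, (‖Complex.exp (-z * (t : ℝ))‖₊ : ℝ≥0∞) *
          ((∫⁻ s, (‖Kfun fm τm u v n x s t‖₊ : ℝ≥0∞)) * (‖h₀ x‖₊ : ℝ≥0∞)) := by
    intro n t
    rw [nnnorm_mul, ENNReal.coe_mul]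
    calc (‖Complex.exp (-z * (t : ℝ))‖₊ : ℝ≥0∞) *
          (‖∫ x in Ωm, (∫ s, Kfun fm τm u v n x s t) * (h₀ x : ℂ)‖₊ : ℝ≥0∞)
        ≤ (‖Complex.exp (-z * (t : ℝ))‖₊ : ℝ≥0∞) *
            ∫⁻ x in Ωm, (‖(∫ s, Kfun fm τm u v n x s t) * (h₀ x : ℂ)‖₊ : ℝ≥0∞) :=
          mul_le_mul_right (enorm_integral_le_lintegral_enorm _) _
      _ ≤ (‖Complex.exp (-z * (t : ℝ))‖₊ : ℝ≥0∞) *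
            ∫⁻ x in Ωm, (∫⁻ s, (‖Kfun fm τm u v n x s t‖₊ : ℝ≥0∞)) * (‖h₀ x‖₊ : ℝ≥0∞) :=
          mul_le_mul_right (lintegral_mono fun x => hnK n x t) _
      _ = ∫⁻ x in Ωm, (‖Complex.exp (-z * (t : ℝ))‖₊ : ℝ≥0∞) *
            ((∫⁻ s, (‖Kfun fm τm u v n x s t‖₊ : ℝ≥0∞)) * (‖h₀ x‖₊ : ℝ≥0∞)) :=
          (lintegral_const_mul' _ _ ENNReal.coe_ne_top).symm
  -- swap
  have hswap : ∀ n,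
      (∫⁻ t in Ioi (0:ℝ), ∫⁻ x in Ωm, (‖Complex.exp (-z * (t : ℝ))‖₊ : ℝ≥0∞) *
          ((∫⁻ s, (‖Kfun fm τm u v n x s t‖₊ : ℝ≥0∞)) * (‖h₀ x‖₊ : ℝ≥0∞)))
      ≤ ∫⁻ x in Ωm, (‖h₀ x‖₊ : ℝ≥0∞) *
          ∫⁻ s, ∫⁻ t : ℝ, (‖Complex.exp (-z * t) * Kfun fm τm u v n x s t‖₊ : ℝ≥0∞) := by
    intro n
    have hg : ∀ (t x : ℝ), (‖Complex.exp (-z * (t : ℝ))‖₊ : ℝ≥0∞) *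
        ((∫⁻ s, (‖Kfun fm τm u v n x s t‖₊ : ℝ≥0∞)) * (‖h₀ x‖₊ : ℝ≥0∞))
        = (‖h₀ x‖₊ : ℝ≥0∞) *
            ∫⁻ s : ℝ, (‖Complex.exp (-z * t) * Kfun fm τm u v n x s t‖₊ : ℝ≥0∞) := by
      intro t x
      have hmul : ∀ s : ℝ, (‖Complex.exp (-z * t) * Kfun fm τm u v n x s t‖₊ : ℝ≥0∞)
          = (‖Complex.exp (-z * (t : ℝ))‖₊ : ℝ≥0∞) * (‖Kfun fm τm u v n x s t‖₊ : ℝ≥0∞) := by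
        intro s; rw [nnnorm_mul, ENNReal.coe_mul]
      simp_rw [hmul]
      rw [lintegral_const_mul' _ _ ENNReal.coe_ne_top]
      ring
    simp_rw [hg]
    refine le_trans (lintegral_mono' Measure.restrict_le_self le_rfl) ?_
    have hbig : Measurable (fun q : (ℝ × ℝ) × ℝ =>
        (‖Complex.exp (-z * q.1.1) * Kfun fm τm u v n q.1.2 q.2 q.1.1‖₊ : ℝ≥0∞)) :=
      ((mexp.comp (measurable_fst.comp measurable_fst)).mul (mKtx n)).enorm
    rw [lintegral_lintegral_swap
      (f := fun (t x : ℝ) => (‖h₀ x‖₊ : ℝ≥0∞) *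
        ∫⁻ s : ℝ, (‖Complex.exp (-z * t) * Kfun fm τm u v n x s t‖₊ : ℝ≥0∞))
      (((hh₀m.nnnorm.coe_nnreal_ennreal.comp measurable_snd).mul
        (Measurable.lintegral_prod_right' hbig)).aemeasurable)]
    refine lintegral_mono fun x => ?_
    have hmeas2 : Measurable (fun t : ℝ =>
        ∫⁻ s : ℝ, (‖Complex.exp (-z * t) * Kfun fm τm u v n x s t‖₊ : ℝ≥0∞)) :=
      Measurable.lintegral_prod_right'
        (f := fun q : ℝ × ℝ => (‖Complex.exp (-z * q.1) * Kfun fm τm u v n x q.2 q.1‖₊ : ℝ≥0∞))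
        (((mexp.comp measurable_fst).mul ((mK n).comp
          (measurable_const.prodMk (measurable_snd.prodMk measurable_fst)))).enorm)
    rw [lintegral_const_mul' _ _ ENNReal.coe_ne_top]
    refine mul_le_mul_right ?_ _
    rw [lintegral_lintegral_swap
      (f := fun (t s : ℝ) => (‖Complex.exp (-z * t) * Kfun fm τm u v n x s t‖₊ : ℝ≥0∞))
      ((((mexp.comp measurable_fst).mul ((mK n).comp
        (measurable_const.prodMk (measurable_snd.prodMk measurable_fst)))).enorm).aemeasurable)]
  -- master bound
  have master : ∀ n,
      (∫⁻ x in Ωm, (‖h₀ x‖₊ : ℝ≥0∞) *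
          ∫⁻ s, ∫⁻ t : ℝ, (‖Complex.exp (-z * t) * Kfun fm τm u v n x s t‖₊ : ℝ≥0∞))
      ≤ ∫⁻ x in Ωm, (‖h₀ x‖₊ : ℝ≥0∞) * ENNReal.ofReal (Mu * Mv / (z.re * z.re) *
          (Real.exp (-z.re * (birk fm τm (n+1) x - τm x))
            - Real.exp (-z.re * (birk fm τm (n+2) x - τm x)))) :=
    fun n => lintegral_mono fun x =>
      mul_le_mul_right (sbound hub hvb hMu0 hMv0 hτpos hz n x) _
  -- telescoping
  have hmonoD : ∀ (i : ℕ) (x : ℝ), Real.exp (-z.re * (birk fm τm (i+2) x - τm x))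
      ≤ Real.exp (-z.re * (birk fm τm (i+1) x - τm x)) := by
    intro i x
    apply Real.exp_le_exp.2
    have := birk_mono (fm := fm) hτpos i x
    nlinarith
  have tele : ∀ x : ℝ, (∑' n : ℕ, ENNReal.ofReal
      (Real.exp (-z.re * (birk fm τm (n+1) x - τm x))
        - Real.exp (-z.re * (birk fm τm (n+2) x - τm x)))) ≤ 1 := by
    intro x
    rw [ENNReal.tsum_eq_iSup_sum]
    apply iSup_le
    intro F
    obtain ⟨N, hN⟩ := F.exists_nat_subset_range
    calc ∑ n ∈ F, ENNReal.ofReal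
          (Real.exp (-z.re * (birk fm τm (n+1) x - τm x))
            - Real.exp (-z.re * (birk fm τm (n+2) x - τm x)))
        ≤ ∑ n ∈ Finset.range N, ENNReal.ofReal
          (Real.exp (-z.re * (birk fm τm (n+1) x - τm x))
            - Real.exp (-z.re * (birk fm τm (n+2) x - τm x))) :=
          Finset.sum_le_sum_of_subset hN
      _ = ENNReal.ofReal (∑ n ∈ Finset.range N,
          (Real.exp (-z.re * (birk fm τm (n+1) x - τm x))
            - Real.exp (-z.re * (birk fm τm (n+2) x - τm x)))) :=
          (ENNReal.ofReal_sum_of_nonneg (fun i _ => sub_nonneg.2 (hmonoD i x))).symm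
      _ = ENNReal.ofReal (Real.exp (-z.re * (birk fm τm (0+1) x - τm x))
            - Real.exp (-z.re * (birk fm τm (N+1) x - τm x))) := by
          rw [Finset.sum_range_sub' (fun i => Real.exp (-z.re * (birk fm τm (i+1) x - τm x))) N]
      _ ≤ ENNReal.ofReal (Real.exp (-z.re * (birk fm τm (0+1) x - τm x))) :=
          ENNReal.ofReal_le_ofReal
            (by linarith [Real.exp_pos (-z.re * (birk fm τm (N+1) x - τm x))])
      _ = 1 := by
          norm_num [birk_one]
  -- measurability of D-terms
  have hDms : ∀ n : ℕ, Measurable (fun x : ℝ => ENNReal.ofReal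
      (Real.exp (-z.re * (birk fm τm (n+1) x - τm x))
        - Real.exp (-z.re * (birk fm τm (n+2) x - τm x)))) := by
    intro n
    apply Measurable.ennreal_ofReal
    exact (Real.measurable_exp.comp
        (((measurable_birk hfm hτm (n+1)).sub hτm).const_mul (-z.re))).sub
      (Real.measurable_exp.comp
        (((measurable_birk hfm hτm (n+2)).sub hτm).const_mul (-z.re)))
  -- sum of the master bounds is finite
  have hC0 : (0:ℝ) ≤ Mu * Mv / (z.re * z.re) := by positivity
  have hsumBlt : (∑' n : ℕ, ∫⁻ x in Ωm, (‖h₀ x‖₊ : ℝ≥0∞) *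
      ENNReal.ofReal (Mu * Mv / (z.re * z.re) *
        (Real.exp (-z.re * (birk fm τm (n+1) x - τm x))
          - Real.exp (-z.re * (birk fm τm (n+2) x - τm x))))) < ∞ := by
    have heq : ∀ (n : ℕ) (x : ℝ), (‖h₀ x‖₊ : ℝ≥0∞) *
        ENNReal.ofReal (Mu * Mv / (z.re * z.re) *
          (Real.exp (-z.re * (birk fm τm (n+1) x - τm x))
            - Real.exp (-z.re * (birk fm τm (n+2) x - τm x))))
        = ENNReal.ofReal (Mu * Mv / (z.re * z.re)) * ((‖h₀ x‖₊ : ℝ≥0∞) *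
            ENNReal.ofReal (Real.exp (-z.re * (birk fm τm (n+1) x - τm x))
              - Real.exp (-z.re * (birk fm τm (n+2) x - τm x)))) := by
      intro n x
      rw [ENNReal.ofReal_mul hC0]
      ring
    calc (∑' n : ℕ, ∫⁻ x in Ωm, (‖h₀ x‖₊ : ℝ≥0∞) *
          ENNReal.ofReal (Mu * Mv / (z.re * z.re) *
            (Real.exp (-z.re * (birk fm τm (n+1) x - τm x))
              - Real.exp (-z.re * (birk fm τm (n+2) x - τm x)))))
        = ∑' n : ℕ, ENNReal.ofReal (Mu * Mv / (z.re * z.re)) *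
            ∫⁻ x in Ωm, (‖h₀ x‖₊ : ℝ≥0∞) *
              ENNReal.ofReal (Real.exp (-z.re * (birk fm τm (n+1) x - τm x))
                - Real.exp (-z.re * (birk fm τm (n+2) x - τm x))) := by
          refine tsum_congr fun n => ?_
          simp_rw [heq n]
          rw [lintegral_const_mul' _ _ ENNReal.ofReal_ne_top]
      _ = ENNReal.ofReal (Mu * Mv / (z.re * z.re)) *
            ∑' n : ℕ, ∫⁻ x in Ωm, (‖h₀ x‖₊ : ℝ≥0∞) *
              ENNReal.ofReal (Real.exp (-z.re * (birk fm τm (n+1) x - τm x))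
                - Real.exp (-z.re * (birk fm τm (n+2) x - τm x))) := ENNReal.tsum_mul_left
      _ ≤ ENNReal.ofReal (Mu * Mv / (z.re * z.re)) * ∫⁻ x in Ωm, (‖h₀ x‖₊ : ℝ≥0∞) := by
          apply mul_le_mul_right
          rw [← lintegral_tsum (f := fun n x => (‖h₀ x‖₊ : ℝ≥0∞) *
              ENNReal.ofReal (Real.exp (-z.re * (birk fm τm (n+1) x - τm x))
                - Real.exp (-z.re * (birk fm τm (n+2) x - τm x)))) (fun n =>
            ((hh₀m.nnnorm.coe_nnreal_ennreal).mul (hDms n)).aemeasurable)]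
          refine lintegral_mono fun x => ?_
          rw [ENNReal.tsum_mul_left]
          exact le_trans (mul_le_mul_right (tele x) _) (by rw [mul_one])
      _ < ∞ := ENNReal.mul_lt_top ENNReal.ofReal_lt_top
          ((hasFiniteIntegral_def _ _).mp hh₀i.2)
  -- per-n chain
  have hchain : ∀ n, (∫⁻ t in Ioi (0:ℝ), ∫⁻ x in Ωm,
      (‖Complex.exp (-z * (t : ℝ))‖₊ : ℝ≥0∞) *
        ((∫⁻ s, (‖Kfun fm τm u v n x s t‖₊ : ℝ≥0∞)) * (‖h₀ x‖₊ : ℝ≥0∞)))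
      ≤ ∫⁻ x in Ωm, (‖h₀ x‖₊ : ℝ≥0∞) * ENNReal.ofReal (Mu * Mv / (z.re * z.re) *
          (Real.exp (-z.re * (birk fm τm (n+1) x - τm x))
            - Real.exp (-z.re * (birk fm τm (n+2) x - τm x)))) :=
    fun n => le_trans (hswap n) (master n)
  -- the tsum condition for integral_tsum
  have hJm_cond : (∑' n : ℕ, ∫⁻ t in Ioi (0:ℝ),
      (‖Complex.exp (-z * t) * ∫ x in Ωm, (∫ s, Kfun fm τm u v n x s t) * (h₀ x : ℂ)‖₊ : ℝ≥0∞))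
      ≠ ∞ := by
    refine ne_top_of_le_ne_top hsumBlt.ne (Summable.tsum_le_tsum (fun n => ?_)
      ENNReal.summable ENNReal.summable)
    exact le_trans (lintegral_mono fun t => hJbd n t) (hchain n)
  -- F1 integrability
  have hF1int : ∀ n, Integrable (Function.uncurry fun (t x : ℝ) =>
      Complex.exp (-z * t) * ((∫ s, Kfun fm τm u v n x s t) * (h₀ x : ℂ)))
      ((volume.restrict (Ioi 0)).prod (volume.restrict Ωm)) := by
    intro n
    constructor
    · exact (mF1 n).aestronglyMeasurable
    · rw [hasFiniteIntegral_def]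
      calc (∫⁻ q : ℝ × ℝ, (‖Complex.exp (-z * q.1) *
              ((∫ s, Kfun fm τm u v n q.2 s q.1) * (h₀ q.2 : ℂ))‖₊ : ℝ≥0∞)
            ∂((volume.restrict (Ioi 0)).prod (volume.restrict Ωm)))
          = ∫⁻ t in Ioi (0:ℝ), ∫⁻ x in Ωm, (‖Complex.exp (-z * t) *
              ((∫ s, Kfun fm τm u v n x s t) * (h₀ x : ℂ))‖₊ : ℝ≥0∞) :=
            lintegral_prod _ ((mF1 n).enorm.aemeasurable)
        _ ≤ ∫⁻ t in Ioi (0:ℝ), ∫⁻ x in Ωm,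
              (‖Complex.exp (-z * (t : ℝ))‖₊ : ℝ≥0∞) *
                ((∫⁻ s, (‖Kfun fm τm u v n x s t‖₊ : ℝ≥0∞)) * (‖h₀ x‖₊ : ℝ≥0∞)) :=
            lintegral_mono fun t => lintegral_mono fun x => hF1bd n t x
        _ ≤ ∫⁻ x in Ωm, (‖h₀ x‖₊ : ℝ≥0∞) * ENNReal.ofReal (Mu * Mv / (z.re * z.re) *
              (Real.exp (-z.re * (birk fm τm (n+1) x - τm x))
                - Real.exp (-z.re * (birk fm τm (n+2) x - τm x)))) := hchain n
        _ < ∞ := ENNReal.lt_top_of_tsum_ne_top hsumBlt.ne n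
  -- assemble
  calc (∫ t in Ioi (0:ℝ), Complex.exp (-z * t) *
          ∑' n : ℕ, ∫ x in Ωm, (∫ s, Kfun fm τm u v n x s t) * (h₀ x : ℂ))
      = ∫ t in Ioi (0:ℝ), ∑' n : ℕ, Complex.exp (-z * t) *
          ∫ x in Ωm, (∫ s, Kfun fm τm u v n x s t) * (h₀ x : ℂ) := by
        refine setIntegral_congr_fun measurableSet_Ioi (fun t _ => ?_)
        exact (tsum_mul_left).symm
    _ = ∑' n : ℕ, ∫ t in Ioi (0:ℝ), Complex.exp (-z * t) *
          ∫ x in Ωm, (∫ s, Kfun fm τm u v n x s t) * (h₀ x : ℂ) :=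
        integral_tsum (fun n => (mexp.mul (mJ n).measurable).aestronglyMeasurable) hJm_cond
    _ = ∑' n : ℕ, ∫ x in Ωm, (h₀ x : ℂ) * hatObs τm u (-z) x *
          Complex.exp (-z * birk fm τm (n+1) x) * hatObs τm v z (fm^[n+1] x) :=
        tsum_congr fun n => keyfubini Ωm h₀ hfm hτm hτpos hu hv hub hvb hMu0 hMv0 hz n
          (hF1int n)

end LapAux

/-- For a suspension semiflow `(Ω, f, τ)`, nonnegative `h₀ ∈ L¹(Ω)` and
bounded measurable `u, v`, for every `z` with `Re z > 0` the Laplace transform of `ρ`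
equals `Σ_{n≥1} ∫_Ω h₀·û_{-z}·e^{-zτ_n}·(v̂_z ∘ fⁿ)`. -/
theorem laplace_transform_rho_eq_sum
    (a b : ℝ) (hab : a < b) (Ω : Set ℝ) (hΩ : Ω = Set.Ioo a b)
    (I : Type) [Countable I] (ω : I → Set ℝ)
    (hω_sub : ∀ i, ω i ⊆ Ω)
    (hω_int : ∀ i, ∃ c d : ℝ, c < d ∧ ω i = Set.Ioo c d)
    (hω_disj : Pairwise (Function.onFun Disjoint ω))
    (hω_full : volume (Ω \ ⋃ i, ω i) = 0)
    (f f' : ℝ → ℝ)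
    (hf_deriv : ∀ i, ∀ x ∈ ω i, HasDerivAt f (f' x) x)
    (hf_cont : ∀ i, ContinuousOn f' (ω i))
    (hf_inj : ∀ i, Set.InjOn f (ω i))
    (hf_into : ∀ i, f '' ω i ⊆ Ω)
    (hf_exp : supNormE (fun x => (f' x)⁻¹) Ω < 1)
    (τ : ℝ → ℝ) (hτ_cont : ContinuousOn τ Ω) (hτ_pos : ∀ x ∈ Ω, 0 < τ x)
    (hτ_int : IntegrableOn τ Ω)
    (h₀ : ℝ → ℝ) (hh₀_meas : Measurable h₀) (hh₀_nonneg : 0 ≤ h₀)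
    (hh₀_int : IntegrableOn h₀ Ω)
    (u v : ℝ × ℝ → ℂ) (hu_meas : Measurable u) (hv_meas : Measurable v)
    (Mu : ℝ) (hu_bd : ∀ p, ‖u p‖ ≤ Mu) (Mv : ℝ) (hv_bd : ∀ p, ‖v p‖ ≤ Mv) :
    ∀ z : ℂ, 0 < z.re →
      ∫ t in Ioi (0 : ℝ), Complex.exp (-z * t) * rhoFn Ω f τ h₀ u v t
        = ∑' n : ℕ, ∫ x in Ω,
            (h₀ x : ℂ) * hatObs τ u (-z) x *
              Complex.exp (-z * birk f τ (n + 1) x) * hatObs τ v z (f^[n + 1] x) := by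
  intro z hz
  classical
  set U : Set ℝ := ⋃ i, ω i with hU
  have hΩmeas : MeasurableSet Ω := by rw [hΩ]; exact measurableSet_Ioo
  have hΩopen : IsOpen Ω := by rw [hΩ]; exact isOpen_Ioo
  have hωopen : ∀ i, IsOpen (ω i) := fun i => by
    obtain ⟨c, d, _, h⟩ := hω_int i; rw [h]; exact isOpen_Ioo
  have hUopen : IsOpen U := isOpen_iUnion hωopen
  have hUsub : U ⊆ Ω := iUnion_subset hω_sub
  have hfcont : ContinuousOn f U := by
    intro x hx
    obtain ⟨i, hi⟩ := mem_iUnion.mp hx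
    exact ((hf_deriv i x hi).differentiableAt.continuousAt).continuousWithinAt
  set fm : ℝ → ℝ := fun x => if x ∈ U then f x else a with hfm_def
  set τm : ℝ → ℝ := fun x => if x ∈ Ω then τ x else 1 with hτm_def
  have hfm : Measurable fm := LapAux.measurable_ite_of_continuousOn hUopen hfcont a
  have hτm : Measurable τm := LapAux.measurable_ite_of_continuousOn hΩopen hτ_cont 1
  have hτmΩ : ∀ x ∈ Ω, τm x = τ x := fun x hx => if_pos hx
  have hfmU : ∀ x ∈ U, fm x = f x := fun x hx => if_pos hx
  have hτmpos : ∀ y, 0 < τm y := by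
    intro y
    by_cases hy : y ∈ Ω
    · rw [hτmΩ y hy]; exact hτ_pos y hy
    · simp only [hτm_def]; rw [if_neg hy]; exact one_pos
  have hτmint : IntegrableOn τm Ω := by
    refine hτ_int.congr ?_
    exact (ae_restrict_iff' hΩmeas).2 (Filter.Eventually.of_forall fun x hx => (hτmΩ x hx).symm)
  -- the expansion constant
  have hSne : supNormE (fun x => (f' x)⁻¹) Ω ≠ ⊤ := (lt_of_lt_of_le hf_exp le_top).ne
  set C : ℝ := (supNormE (fun x => (f' x)⁻¹) Ω).toReal with hCdef
  have hC1 : C < 1 := by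
    have := (ENNReal.toReal_lt_toReal hSne ENNReal.one_ne_top).mpr hf_exp
    simpa using this
  have haeC : ∀ᵐ x ∂(volume.restrict Ω), |(f' x)⁻¹| ≤ C := by
    have h1 := ENNReal.ae_le_essSup (μ := volume.restrict Ω)
      (fun x => (‖(f' x)⁻¹‖₊ : ℝ≥0∞))
    refine h1.mono fun x hx => ?_
    have h2 : (‖(f' x)⁻¹‖₊ : ℝ≥0∞) ≤ ENNReal.ofReal C := by
      rw [hCdef, ENNReal.ofReal_toReal hSne]; exact hx
    rw [← enorm_eq_nnnorm, ← ofReal_norm_eq_enorm] at h2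
    rw [← Real.norm_eq_abs]
    exact (ENNReal.ofReal_le_ofReal_iff ENNReal.toReal_nonneg).mp h2
  have hL1 : ∀ i, ∀ x ∈ ω i, 1 ≤ C * |f' x| := by
    intro i x hx
    by_contra hlt
    push_neg at hlt
    have hVopen : IsOpen {y : ℝ | C * |y| < 1} :=
      isOpen_lt (continuous_const.mul continuous_abs) continuous_const
    have hWopen : IsOpen (ω i ∩ f' ⁻¹' {y | C * |y| < 1}) :=
      (hf_cont i).isOpen_inter_preimage (hωopen i) hVopen
    set W := ω i ∩ f' ⁻¹' {y | C * |y| < 1} with hW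
    have hxW : x ∈ W := ⟨hx, hlt⟩
    have hWnull : volume {w ∈ W | f' w ≠ 0} = 0 := by
      have hsub : {w ∈ W | f' w ≠ 0} ⊆ {w | ¬ |(f' w)⁻¹| ≤ C} := by
        intro w hw
        obtain ⟨⟨hwω, hwV⟩, hwne⟩ := hw
        simp only [mem_setOf_eq, not_le]
        have habs : 0 < |f' w| := abs_pos.mpr hwne
        have hwV' : C * |f' w| < 1 := hwV
        have : C < 1 / |f' w| := (lt_div_iff₀ habs).mpr (by linarith)
        rw [abs_inv, inv_eq_one_div]
        exact this
      have hWΩ : {w ∈ W | f' w ≠ 0} ⊆ Ω := fun w hw => hω_sub i hw.1.1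
      have hnull : (volume.restrict Ω) {w | ¬ |(f' w)⁻¹| ≤ C} = 0 := ae_iff.mp haeC
      refine le_zero_iff.mp ?_
      calc volume {w ∈ W | f' w ≠ 0}
          = (volume.restrict Ω) {w ∈ W | f' w ≠ 0} := by
            rw [Measure.restrict_apply' hΩmeas, inter_eq_self_of_subset_left hWΩ]
        _ ≤ (volume.restrict Ω) {w | ¬ |(f' w)⁻¹| ≤ C} := measure_mono hsub
        _ = 0 := hnull
    have hf'W : ∀ w ∈ W, f' w = 0 := by
      intro w hw
      by_contra hne
      have hW2open : IsOpen (ω i ∩ f' ⁻¹' ({y | C * |y| < 1} ∩ {y | y ≠ 0})) :=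
        (hf_cont i).isOpen_inter_preimage (hωopen i) (hVopen.inter isOpen_ne)
      have hW2sub : (ω i ∩ f' ⁻¹' ({y | C * |y| < 1} ∩ {y | y ≠ 0}))
          ⊆ {w ∈ W | f' w ≠ 0} := fun y hy => ⟨⟨hy.1, hy.2.1⟩, hy.2.2⟩
      have hpos := hW2open.measure_pos volume ⟨w, hw.1, hw.2, hne⟩
      exact absurd (measure_mono_null hW2sub hWnull) hpos.ne'
    obtain ⟨ε, hε, hball⟩ := Metric.isOpen_iff.mp hWopen x hxW
    have hIcc : Icc x (x + ε/2) ⊆ W := by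
      intro y hy
      apply hball
      rw [Metric.mem_ball, Real.dist_eq, abs_of_nonneg (by linarith [hy.1])]
      linarith [hy.2]
    have hlt2 : x < x + ε/2 := by linarith
    have hWω : W ⊆ ω i := fun w hw => hw.1
    have hcontIcc : ContinuousOn f (Icc x (x + ε/2)) := by
      intro y hy
      have hyU : y ∈ U := mem_iUnion.mpr ⟨i, hWω (hIcc hy)⟩
      exact (hfcont.continuousAt (hUopen.mem_nhds hyU)).continuousWithinAt
    have hderiv : ∀ y ∈ Ioo x (x + ε/2), HasDerivAt f (f' y) y := fun y hy =>
      hf_deriv i y (hWω (hIcc (Ioo_subset_Icc_self hy)))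
    obtain ⟨ξ, hξmem, hξ⟩ := exists_hasDerivAt_eq_slope f f' hlt2 hcontIcc hderiv
    have hξ0 : f' ξ = 0 := hf'W ξ (hIcc (Ioo_subset_Icc_self hξmem))
    rw [hξ0] at hξ
    have hfeq : f (x + ε/2) = f x := by
      rcases div_eq_zero_iff.mp hξ.symm with h | h
      · linarith [sub_eq_zero.mp h]
      · exfalso; have : x + ε/2 - x = ε/2 := by ring
        rw [this] at h; linarith
    have hinj := hf_inj i (hWω (hIcc (right_mem_Icc.mpr hlt2.le))) (hWω hxW) hfeq
    linarith
  have hC0 : 0 < C := by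
    have hUne : U.Nonempty := by
      by_contra hne
      rw [not_nonempty_iff_eq_empty] at hne
      have h1 : volume (Ω \ U) = volume Ω := by rw [hne, diff_empty]
      have h2 : volume Ω = ENNReal.ofReal (b - a) := by rw [hΩ, Real.volume_Ioo]
      have h3 : volume (Ω \ U) = 0 := hω_full
      rw [h3, h2] at h1
      exact absurd h1.symm (ENNReal.ofReal_pos.mpr (by linarith)).ne'
    obtain ⟨x, hx⟩ := hUne
    obtain ⟨i, hi⟩ := mem_iUnion.mp hx
    have h1 := hL1 i x hi
    by_contra h
    push_neg at h
    nlinarith [abs_nonneg (f' x)]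
  -- null preimages
  have hL3 : ∀ N : Set ℝ, MeasurableSet N → volume N = 0 →
      volume {x ∈ U | f x ∈ N} = 0 := by
    intro N hNmeas hNnull
    have hdecomp : {x ∈ U | f x ∈ N} = ⋃ i, (ω i ∩ f ⁻¹' N) := by
      ext y
      simp only [mem_setOf_eq, mem_iUnion, mem_inter_iff, mem_preimage]
      constructor
      · rintro ⟨hyU, hyN⟩
        obtain ⟨i, hi⟩ := mem_iUnion.mp hyU
        exact ⟨i, hi, hyN⟩
      · rintro ⟨i, hi, hyN⟩
        exact ⟨mem_iUnion.mpr ⟨i, hi⟩, hyN⟩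
    rw [hdecomp]
    refine measure_iUnion_null fun i => ?_
    have hsm : MeasurableSet (ω i ∩ f ⁻¹' N) := by
      have heq : ω i ∩ f ⁻¹' N = ω i ∩ fm ⁻¹' N := by
        ext y
        simp only [mem_inter_iff, mem_preimage]
        constructor
        · rintro ⟨hy, h2⟩
          exact ⟨hy, by rw [hfmU y (mem_iUnion.mpr ⟨i, hy⟩)]; exact h2⟩
        · rintro ⟨hy, h2⟩
          refine ⟨hy, ?_⟩
          rw [← hfmU y (mem_iUnion.mpr ⟨i, hy⟩)]
          exact h2
      rw [heq]
      exact (hωopen i).measurableSet.inter (hfm hNmeas)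
    have hder : ∀ y ∈ ω i ∩ f ⁻¹' N, HasFDerivWithinAt f
        (ContinuousLinearMap.smulRight (1 : ℝ →L[ℝ] ℝ) (f' y)) (ω i ∩ f ⁻¹' N) y :=
      fun y hy => (hf_deriv i y hy.1).hasFDerivAt.hasFDerivWithinAt
    have hinj : InjOn f (ω i ∩ f ⁻¹' N) := (hf_inj i).mono inter_subset_left
    have hcv := MeasureTheory.lintegral_abs_det_fderiv_eq_addHaar_image volume hsm hder hinj
    have himg : volume (f '' (ω i ∩ f ⁻¹' N)) = 0 :=
      measure_mono_null (by rintro y ⟨w, hw, rfl⟩; exact hw.2) hNnull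
    rw [himg] at hcv
    by_contra hne
    have hlow : ∀ y ∈ ω i ∩ f ⁻¹' N, ENNReal.ofReal (1/C)
        ≤ ENNReal.ofReal |(ContinuousLinearMap.smulRight (1 : ℝ →L[ℝ] ℝ) (f' y)).det| := by
      intro y hy
      rw [ContinuousLinearMap.smulRight_one_eq_toSpanSingleton, ContinuousLinearMap.det_toSpanSingleton]
      apply ENNReal.ofReal_le_ofReal
      have h1 := hL1 i y hy.1
      rw [div_le_iff₀ hC0]
      linarith
    have hle : ENNReal.ofReal (1/C) * volume (ω i ∩ f ⁻¹' N) = 0 := by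
      refine le_antisymm ?_ (by positivity)
      calc ENNReal.ofReal (1/C) * volume (ω i ∩ f ⁻¹' N)
          = ∫⁻ _ in ω i ∩ f ⁻¹' N, ENNReal.ofReal (1/C) := (setLIntegral_const _ _).symm
        _ ≤ ∫⁻ y in ω i ∩ f ⁻¹' N,
              ENNReal.ofReal |(ContinuousLinearMap.smulRight (1 : ℝ →L[ℝ] ℝ) (f' y)).det| := by
            rw [← lintegral_indicator hsm, ← lintegral_indicator hsm]
            refine lintegral_mono fun y => ?_
            by_cases hy : y ∈ ω i ∩ f ⁻¹' N
            · rw [Set.indicator_of_mem hy, Set.indicator_of_mem hy]; exact hlow y hy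
            · rw [Set.indicator_of_notMem hy, Set.indicator_of_notMem hy]
        _ = 0 := hcv
    rcases mul_eq_zero.mp hle with h | h
    · exact absurd h (ENNReal.ofReal_pos.mpr (by positivity)).ne'
    · exact hne h
  -- orbits staying in U
  have hWknull : ∀ k : ℕ, volume {x | (∀ j ≤ k, f^[j] x ∈ U) ∧ f^[k+1] x ∉ U} = 0 := by
    intro k
    induction k with
    | zero =>
      have hsub : {x | (∀ j ≤ 0, f^[j] x ∈ U) ∧ f^[0+1] x ∉ U}
          ⊆ {x ∈ U | f x ∈ toMeasurable volume (Ω \ U)} := by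
        intro y hy
        obtain ⟨h1, h2⟩ := hy
        have hyU : y ∈ U := by simpa using h1 0 le_rfl
        refine ⟨hyU, subset_toMeasurable _ _ ?_⟩
        have hfy : f y ∈ Ω := by
          obtain ⟨i, hi⟩ := mem_iUnion.mp hyU
          exact hf_into i ⟨y, hi, rfl⟩
        exact ⟨hfy, by simpa using h2⟩
      refine measure_mono_null hsub (hL3 _ (measurableSet_toMeasurable _ _) ?_)
      rw [measure_toMeasurable]
      exact hω_full
    | succ k ih =>
      have hsub : {x | (∀ j ≤ k+1, f^[j] x ∈ U) ∧ f^[k+1+1] x ∉ U}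
          ⊆ {x ∈ U | f x ∈ toMeasurable volume
              {x | (∀ j ≤ k, f^[j] x ∈ U) ∧ f^[k+1] x ∉ U}} := by
        intro y hy
        obtain ⟨h1, h2⟩ := hy
        have hyU : y ∈ U := by simpa using h1 0 (by omega)
        refine ⟨hyU, subset_toMeasurable _ _ ?_⟩
        constructor
        · intro j hj
          rw [← Function.iterate_succ_apply]
          exact h1 (j+1) (by omega)
        · rw [← Function.iterate_succ_apply]
          exact h2
      refine measure_mono_null hsub (hL3 _ (measurableSet_toMeasurable _ _) ?_)
      rw [measure_toMeasurable]
      exact ih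
  set G : Set ℝ := {x ∈ U | ∀ k : ℕ, f^[k] x ∈ U} with hG
  have hGnull : volume (Ω \ G) = 0 := by
    have hsub : Ω \ G ⊆ (Ω \ U) ∪
        ⋃ k : ℕ, {x | (∀ j ≤ k, f^[j] x ∈ U) ∧ f^[k+1] x ∉ U} := by
      intro y hy
      obtain ⟨hyΩ, hyG⟩ := hy
      by_cases hyU : y ∈ U
      · right
        have hex : ∃ k, f^[k] y ∉ U := by
          by_contra hall
          push_neg at hall
          exact hyG ⟨hyU, hall⟩
        have hk0spec := Nat.find_spec hex
        have hk0min : ∀ j < Nat.find hex, f^[j] y ∈ U :=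
          fun j hj => not_not.mp (Nat.find_min hex hj)
        have hk0pos : Nat.find hex ≠ 0 := by
          intro h
          rw [h] at hk0spec
          simp at hk0spec
          exact hk0spec hyU
        obtain ⟨m, hm⟩ := Nat.exists_eq_succ_of_ne_zero hk0pos
        refine mem_iUnion.mpr ⟨m, ⟨fun j hj => hk0min j (by omega), ?_⟩⟩
        have : m + 1 = Nat.find hex := hm.symm
        rw [this]
        exact hk0spec
      · left; exact ⟨hyΩ, hyU⟩
    refine measure_mono_null hsub (measure_union_null hω_full (measure_iUnion_null hWknull))
  have hGfm : ∀ x ∈ G, ∀ k : ℕ, f^[k] x ∈ U ∧ f^[k] x = fm^[k] x := by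
    intro x hx k
    induction k with
    | zero => exact ⟨hx.1, rfl⟩
    | succ k ih =>
      obtain ⟨h1, h2⟩ := ih
      refine ⟨hx.2 (k+1), ?_⟩
      rw [Function.iterate_succ_apply', Function.iterate_succ_apply', ← h2, hfmU _ h1]
  have hbirkG : ∀ x ∈ G, ∀ k : ℕ, birk f τ k x = birk fm τm k x := by
    intro x hx k
    refine Finset.sum_congr rfl fun j _ => ?_
    obtain ⟨h1, h2⟩ := hGfm x hx j
    rw [← h2, hτmΩ _ (hUsub h1)]
  have haeG : ∀ᵐ x : ℝ, x ∈ Ω → x ∈ G := by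
    have h1 : {x : ℝ | ¬(x ∈ Ω → x ∈ G)} = Ω \ G := by
      ext y
      simp only [mem_setOf_eq, mem_diff, Classical.not_imp]
    rw [ae_iff, h1]
    exact hGnull
  have hrho : ∀ t : ℝ, rhoFn Ω f τ h₀ u v t
      = ∑' n : ℕ, ∫ x in Ω, (∫ s, LapAux.Kfun fm τm u v n x s t) * (h₀ x : ℂ) := by
    intro t
    unfold rhoFn
    refine tsum_congr fun n => ?_
    refine setIntegral_congr_ae hΩmeas (haeG.mono fun x hx hxΩ => ?_)
    have hxG : x ∈ G := hx hxΩ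
    have hbirk1 := hbirkG x hxG (n+1)
    have hbirk2 := hbirkG x hxG (n+2)
    have hfn : f^[n+1] x = fm^[n+1] x := (hGfm x hxG (n+1)).2
    have hτx : τ x = τm x := (hτmΩ x hxΩ).symm
    have key : (∫ s in Ioo 0 (τ x),
        if birk f τ (n+1) x - s ≤ t ∧ t < birk f τ (n+2) x - s
        then u (x,s) * v (f^[n+1] x, s + t - birk f τ (n+1) x) else 0)
        = ∫ s, LapAux.Kfun fm τm u v n x s t := by
      rw [← integral_indicator measurableSet_Ioo]
      refine integral_congr_ae (Filter.Eventually.of_forall fun s => ?_)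
      rw [Set.indicator_apply]
      unfold LapAux.Kfun
      beta_reduce
      rw [← hbirk1, ← hbirk2, ← hfn, ← hτx]
      by_cases hs : s ∈ Ioo 0 (τ x)
      · rw [if_pos hs]
        obtain ⟨h1, h2⟩ := hs
        by_cases hc : birk f τ (n+1) x - s ≤ t ∧ t < birk f τ (n+2) x - s
        · rw [if_pos hc, if_pos ⟨h1, h2, hc⟩]
        · rw [if_neg hc, if_neg (fun hcc => hc ⟨hcc.2.2.1, hcc.2.2.2⟩)]
      · rw [if_neg hs, if_neg (fun hcc => hs (Set.mem_Ioo.mpr ⟨hcc.1, hcc.2.1⟩))]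
    rw [key]
  calc (∫ t in Ioi (0:ℝ), Complex.exp (-z * t) * rhoFn Ω f τ h₀ u v t)
      = ∫ t in Ioi (0:ℝ), Complex.exp (-z * t) *
          ∑' n : ℕ, ∫ x in Ω, (∫ s, LapAux.Kfun fm τm u v n x s t) * (h₀ x : ℂ) := by
        refine setIntegral_congr_fun measurableSet_Ioi fun t _ => ?_
        rw [hrho t]
    _ = ∑' n : ℕ, ∫ x in Ω, (h₀ x : ℂ) * hatObs τm u (-z) x *
          Complex.exp (-z * birk fm τm (n+1) x) * hatObs τm v z (fm^[n+1] x) :=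
        LapAux.laplace_core Ω fm τm hfm hτm hτmpos h₀ hh₀_meas hh₀_int u v hu_meas hv_meas
          Mu Mv hu_bd hv_bd z hz
    _ = ∑' n : ℕ, ∫ x in Ω, (h₀ x : ℂ) * hatObs τ u (-z) x *
          Complex.exp (-z * birk f τ (n+1) x) * hatObs τ v z (f^[n+1] x) := by
        refine tsum_congr fun n => ?_
        refine setIntegral_congr_ae hΩmeas (haeG.mono fun x hx hxΩ => ?_)
        have hxG := hx hxΩ
        have hb := hbirkG x hxG (n+1)
        have hfn := (hGfm x hxG (n+1)).2
        have hfnU := (hGfm x hxG (n+1)).1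
        have h1 : hatObs τm u (-z) x = hatObs τ u (-z) x := by
          unfold hatObs
          rw [hτmΩ x hxΩ]
        have h2 : hatObs τm v z (fm^[n+1] x) = hatObs τ v z (f^[n+1] x) := by
          unfold hatObs
          rw [← hfn, hτmΩ _ (hUsub hfnU)]
        rw [h1, h2, ← hb]
end
end

section
/- Let λ > 0, β ∈ (0,1), α ∈ (0,1) and σ > 0 satisfy σ ≤ λ(1−β−α). Then for every z ∈ ℂ with Re z ∈ [−σ, 0], the function x ↦ x^{z/λ + 1 − β} (principal complex power) is α-Hölder on (0,1): for all x, y ∈ (0,1), |y^{z/λ+1−β} − x^{z/λ+1−β}| ≤ (|z/λ+1−β| / Re(z/λ+1−β))·|y−x|^α. -/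
open Set

/-- Subadditivity of `rpow` with exponent in `(0,1]` on nonnegative reals. -/
lemma rpow_add_le_add_rpow_real {c : ℝ} (hc : 0 < c) (hc1 : c ≤ 1)
    {a b : ℝ} (ha : 0 ≤ a) (hb : 0 ≤ b) :
    (a + b) ^ c ≤ a ^ c + b ^ c := by
  have h := NNReal.rpow_add_le_add_rpow (a.toNNReal) (b.toNNReal) hc.le hc1
  rw [← Real.toNNReal_add ha hb] at h
  have h2 := NNReal.coe_le_coe.2 h
  simpa [NNReal.coe_rpow, Real.coe_toNNReal _ (add_nonneg ha hb),
    Real.coe_toNNReal _ ha, Real.coe_toNNReal _ hb] using h2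

/-- Real version of `integral_exp_mul_complex`. -/
lemma integral_exp_mul_complex_re {c : ℝ} (hc : c ≠ 0) {a b : ℝ} :
    (∫ x in a..b, Real.exp (c * x)) = (Real.exp (c * b) - Real.exp (c * a)) / c := by
  have D : ∀ x : ℝ, HasDerivAt (fun y : ℝ => Real.exp (c * y) / c) (Real.exp (c * x)) x := by
    intro x
    have h1 : HasDerivAt (fun y : ℝ => c * y) c x := by
      simpa using (hasDerivAt_id x).const_mul c
    have h3 := h1.exp.div_const c
    rwa [mul_div_cancel_right₀ _ hc] at h3
  rw [intervalIntegral.integral_deriv_eq_sub' _ (funext fun x => (D x).deriv)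
    (fun x _ => (D x).differentiableAt) (by fun_prop)]
  ring

/-- Integral estimate: `‖e^{wv} - e^{wu}‖ ≤ (‖w‖/Re w)·(e^{(Re w)v} - e^{(Re w)u})`. -/
lemma norm_cexp_sub_cexp_le {w : ℂ} (hw : 0 < w.re) {u v : ℝ} (huv : u ≤ v) :
    ‖Complex.exp (w * v) - Complex.exp (w * u)‖
      ≤ (‖w‖ / w.re) * (Real.exp (w.re * v) - Real.exp (w.re * u)) := by
  have hw0 : w ≠ 0 := fun h => by simp [h] at hw
  have hint := integral_exp_mul_complex (a := u) (b := v) hw0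
  have heq : Complex.exp (w * v) - Complex.exp (w * u)
      = ∫ t in u..v, w * Complex.exp (w * t) := by
    rw [intervalIntegral.integral_const_mul, hint]
    field_simp
  rw [heq]
  have hnorm : ∀ t : ℝ, ‖w * Complex.exp (w * t)‖ = ‖w‖ * Real.exp (w.re * t) := by
    intro t
    rw [norm_mul, Complex.norm_exp]
    congr 2
    simp [Complex.mul_re]
  calc ‖∫ t in u..v, w * Complex.exp (w * t)‖
      ≤ ∫ t in u..v, ‖w * Complex.exp (w * t)‖ :=
        intervalIntegral.norm_integral_le_integral_norm huv
    _ = ∫ t in u..v, ‖w‖ * Real.exp (w.re * t) := by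
        simp_rw [hnorm]
    _ = ‖w‖ * ((Real.exp (w.re * v) - Real.exp (w.re * u)) / w.re) := by
        rw [intervalIntegral.integral_const_mul, integral_exp_mul_complex_re hw.ne']
    _ = (‖w‖ / w.re) * (Real.exp (w.re * v) - Real.exp (w.re * u)) := by ring

/-- Let `λ > 0`, `β, α ∈ (0,1)`, `σ > 0` with `σ ≤ λ(1-β-α)`. Then for
every `z ∈ ℂ` with `Re z ∈ [-σ, 0]` the function `x ↦ x^{z/λ+1-β}` (principal complex
power) is `α`-Hölder on `(0,1)`: for all `x, y ∈ (0,1)`,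
`|y^{z/λ+1-β} - x^{z/λ+1-β}| ≤ (|z/λ+1-β| / Re(z/λ+1-β))·|y-x|^α`. -/
theorem cpow_holder_on_unit_interval
    (lam β α σ : ℝ) (hlam : 0 < lam) (hβ : β ∈ Ioo (0 : ℝ) 1)
    (hα : α ∈ Ioo (0 : ℝ) 1) (hσ : 0 < σ) (hσle : σ ≤ lam * (1 - β - α)) :
    ∀ z : ℂ, z.re ∈ Icc (-σ) 0 →
      ∀ x ∈ Ioo (0 : ℝ) 1, ∀ y ∈ Ioo (0 : ℝ) 1,
        ‖Complex.exp ((z / (lam : ℂ) + 1 - (β : ℂ)) * (Real.log y : ℂ))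
            - Complex.exp ((z / (lam : ℂ) + 1 - (β : ℂ)) * (Real.log x : ℂ))‖
          ≤ (‖z / (lam : ℂ) + 1 - (β : ℂ)‖ / (z / (lam : ℂ) + 1 - (β : ℂ)).re)
              * |y - x| ^ α := by
  intro z hz
  set w : ℂ := z / (lam : ℂ) + 1 - (β : ℂ) with hwdef
  set c : ℝ := w.re with hcdef
  have hcre : c = z.re / lam + 1 - β := by
    simp [hcdef, hwdef, Complex.div_ofReal_re]
  have hcα : α ≤ c := by
    rw [hcre]
    have h1 : -(1 - β - α) ≤ z.re / lam := by
      rw [neg_le, ← neg_div]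
      calc -z.re / lam ≤ σ / lam := by
            apply div_le_div_of_nonneg_right _ hlam.le
            · linarith [hz.1]
        _ ≤ 1 - β - α := by
            rw [div_le_iff₀ hlam]; linarith [hσle]
    linarith
  have hc0 : 0 < c := lt_of_lt_of_le hα.1 hcα
  have hc1 : c ≤ 1 := by
    rw [hcre]
    have : z.re / lam ≤ 0 := div_nonpos_of_nonpos_of_nonneg hz.2 hlam.le
    linarith [hβ.1]
  -- main claim for ordered pair
  have main : ∀ x ∈ Ioo (0 : ℝ) 1, ∀ y ∈ Ioo (0 : ℝ) 1, x ≤ y →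
      ‖Complex.exp (w * (Real.log y : ℂ)) - Complex.exp (w * (Real.log x : ℂ))‖
        ≤ (‖w‖ / c) * |y - x| ^ α := by
    intro x hx y hy hxy
    have hlog : Real.log x ≤ Real.log y := Real.log_le_log hx.1 hxy
    have hkey := norm_cexp_sub_cexp_le hc0 hlog
    refine hkey.trans ?_
    have hdiv : 0 ≤ ‖w‖ / c := div_nonneg (norm_nonneg _) hc0.le
    apply mul_le_mul_of_nonneg_left _ hdiv
    have hex : ∀ t : ℝ, 0 < t → Real.exp (c * Real.log t) = t ^ c := by
      intro t ht
      rw [Real.rpow_def_of_pos ht, mul_comm]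
    rw [hex x hx.1, hex y hy.1]
    have habs : |y - x| = y - x := abs_of_nonneg (by linarith)
    rw [habs]
    have hsub : y ^ c - x ^ c ≤ (y - x) ^ c := by
      have h := rpow_add_le_add_rpow_real hc0 hc1 (a := y - x) (b := x)
        (by linarith) hx.1.le
      rw [sub_add_cancel] at h
      linarith
    refine hsub.trans ?_
    rcases eq_or_lt_of_le (by linarith : (0:ℝ) ≤ y - x) with h0 | h0
    · rw [← h0, Real.zero_rpow hc0.ne', Real.zero_rpow (ne_of_gt hα.1)]
    · exact Real.rpow_le_rpow_of_exponent_ge h0 (by linarith [hx.1, hy.2]) hcα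
  intro x hx y hy
  rcases le_total x y with h | h
  · exact main x hx y hy h
  · rw [norm_sub_rev, abs_sub_comm]
    exact main y hy x hx h
end
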